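/- arXiv:2310.08454 — 6 statements merged into one kernel-verified Lean document; each statement's English description precedes it below -/
import Mathlib

section
/- The level invariants of the push-relabel algorithm for polymatroid sum are maintained: if Θ: E → {0,…,m} satisfies (L1) Θ(e) = 0 for every oversold item e, and (L2) min_{f ∈ T_i(e)} Θ(f) ≥ Θ(e) − 1 for all buyers i and items e, then both invariants still hold after a push operation (replacing z_i by z_i − αχ_f + αχ_e with f ∈ T_i(e), Θ(f) = Θ(e) − 1, and α = min{b(e) − Σ_ℓ z_ℓ(e), w_i(e,f)}) and after a relabel operation (increasing Θ(e) by 1 for an undersold item e for which no push is possible). -/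
open Finset

variable {E : Type*} [Fintype E] [DecidableEq E]

/-- Characteristic (unit) vector of an item. -/
def chi (e : E) : E → ℤ := fun f => if f = e then 1 else 0

/-- The integer box `[0, b]_ℤ`. -/
def Box (b : E → ℤ) : Set (E → ℤ) := {z | ∀ e, 0 ≤ z e ∧ z e ≤ b e}

/-- M-convex set: exchange property. -/
def MConvex (B : Set (E → ℤ)) : Prop :=
  ∀ x ∈ B, ∀ y ∈ B, ∀ e : E, y e < x e →
    ∃ f : E, x f < y f ∧ x - chi e + chi f ∈ B ∧ y + chi e - chi f ∈ B

/-- `ρ` is the rank function of `B`: `ρ S = max {z(S) : z ∈ B}`. -/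
def IsRank (B : Set (E → ℤ)) (ρ : Finset E → ℤ) : Prop :=
  ∀ S : Finset E, IsGreatest ((fun z : E → ℤ => ∑ e ∈ S, z e) '' B) (ρ S)

/-- A set `S` is tight for `z` if `z(S) = ρ S`. -/
def Tight (ρ : Finset E → ℤ) (z : E → ℤ) (S : Finset E) : Prop :=
  ∑ e ∈ S, z e = ρ S

/-- `T` assigns to each item `e` the unique inclusion-wise minimal tight set containing `e`. -/
def MinTightAt (ρ : Finset E → ℤ) (z : E → ℤ) (T : E → Finset E) : Prop :=
  ∀ e, e ∈ T e ∧ Tight ρ z (T e) ∧ ∀ S, e ∈ S → Tight ρ z S → T e ⊆ S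

/-- Level invariant (L1): oversold items have level 0. -/
def LevelInv1 {N : Type*} [Fintype N] (b : E → ℤ) (z : N → E → ℤ) (Θ : E → ℤ) : Prop :=
  ∀ e, b e < ∑ i, z i e → Θ e = 0

/-- Level invariant (L2): `min_{f ∈ T_i(e)} Θ(f) ≥ Θ(e) − 1`. -/
def LevelInv2 {N : Type*} (Θ : E → ℤ) (T : N → E → Finset E) : Prop :=
  ∀ (i : N) (e : E), ∀ f ∈ T i e, Θ e - 1 ≤ Θ f

section Aux

set_option linter.unusedSectionVars false

lemma sum_mp (y : E → ℤ) (e f : E) (S : Finset E) :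
    ∑ g ∈ S, (y - chi e + chi f) g
      = ∑ g ∈ S, y g - (if e ∈ S then 1 else 0) + (if f ∈ S then 1 else 0) := by
  simp [chi, Finset.sum_add_distrib, Finset.sum_sub_distrib]

lemma sum_pm (y : E → ℤ) (e f : E) (S : Finset E) :
    ∑ g ∈ S, (y + chi e - chi f) g
      = ∑ g ∈ S, y g + (if e ∈ S then 1 else 0) - (if f ∈ S then 1 else 0) := by
  simp [chi, Finset.sum_add_distrib, Finset.sum_sub_distrib]

lemma sum_shift (y : E → ℤ) (α : ℤ) (e f : E) (S : Finset E) :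
    ∑ g ∈ S, (y - α • chi f + α • chi e) g
      = ∑ g ∈ S, y g - (if f ∈ S then α else 0) + (if e ∈ S then α else 0) := by
  simp [chi, Finset.sum_add_distrib, Finset.sum_sub_distrib, mul_ite,
    ← Finset.mul_sum]

lemma le_rank {B : Set (E → ℤ)} {ρ : Finset E → ℤ} (hρ : IsRank B ρ)
    {y : E → ℤ} (hy : y ∈ B) (S : Finset E) : ∑ g ∈ S, y g ≤ ρ S :=
  (hρ S).2 ⟨y, hy, rfl⟩

lemma minTight_unique {ρ : Finset E → ℤ} {z : E → ℤ} {T T' : E → Finset E}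
    (h : MinTightAt ρ z T) (h' : MinTightAt ρ z T') : T = T' := by
  funext e
  exact Finset.Subset.antisymm
    ((h e).2.2 _ (h' e).1 (h' e).2.1) ((h' e).2.2 _ (h e).1 (h e).2.1)

lemma tight_union {B : Set (E → ℤ)} (hM : MConvex B) {ρ : Finset E → ℤ}
    (hρ : IsRank B ρ) {z : E → ℤ} (hz : z ∈ B) {S S' : Finset E}
    (hS : Tight ρ z S) (hS' : Tight ρ z S') : Tight ρ z (S ∪ S') := by
  obtain ⟨y0, hy0B, hy0U⟩ := (hρ (S ∪ S')).1
  set U := S ∪ S' with hU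
  have key : ∀ n : ℕ, ∀ y ∈ B, (∑ g ∈ U, y g) = ρ U →
      (∑ g : E, |y g - z g|) ≤ (n : ℤ) → Tight ρ z U := by
    intro n
    induction n with
    | zero =>
      intro y hy hyU hm
      have heq : ∀ g, y g = z g := by
        intro g
        have h1 : (0:ℤ) ≤ ∑ g : E, |y g - z g| :=
          Finset.sum_nonneg fun g _ => abs_nonneg _
        have h0 := (Finset.sum_eq_zero_iff_of_nonneg
          (fun g _ => abs_nonneg (y g - z g))).1 (le_antisymm (by exact_mod_cast hm) h1)
        have h2 := abs_eq_zero.1 (h0 g (mem_univ g))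
        linarith
      have : ∑ g ∈ U, z g = ∑ g ∈ U, y g := Finset.sum_congr rfl fun g _ => (heq g).symm
      unfold Tight; rw [this, hyU]
    | succ n ih =>
      intro y hy hyU hm
      by_cases hcase : ∑ g ∈ U, z g = ρ U
      · exact hcase
      have hlt : ∑ g ∈ U, z g < ∑ g ∈ U, y g := by
        rw [hyU]
        exact lt_of_le_of_ne (le_rank hρ hz U) hcase
      have hex : ∃ e ∈ U, z e < y e := by
        by_contra hc
        push_neg at hc
        exact absurd (Finset.sum_le_sum hc) (not_le.2 hlt)
      obtain ⟨e, heU, he⟩ := hex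
      obtain ⟨f, hf, hxB, hzB⟩ := hM y hy z hz e he
      have hef : e ≠ f := fun h => by rw [h] at he; linarith
      -- f is in every tight set containing e
      have hfmem : ∀ W : Finset E, Tight ρ z W → e ∈ W → f ∈ W := by
        intro W hW heW
        by_contra hfW
        have := le_rank hρ hzB W
        rw [sum_pm] at this
        simp [heW, hfW] at this
        unfold Tight at hW
        linarith
      have hfU : f ∈ U := by
        rw [hU] at heU ⊢
        rcases Finset.mem_union.1 heU with h | h
        · exact Finset.mem_union_left _ (hfmem S hS h)
        · exact Finset.mem_union_right _ (hfmem S' hS' h)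
      -- new maximizer y' := y - chi e + chi f
      have hy'U : ∑ g ∈ U, (y - chi e + chi f) g = ρ U := by
        rw [sum_mp]
        simp [heU, hfU, hyU]
      have hmeas : ∑ g : E, |(y - chi e + chi f) g - z g| ≤ (n : ℤ) := by
        have hterm : ∀ g : E, |(y - chi e + chi f) g - z g|
            = |y g - z g| + ((if g = e then (-1:ℤ) else 0) + (if g = f then (-1:ℤ) else 0)) := by
          intro g
          have hval : (y - chi e + chi f) g
              = y g - (if g = e then 1 else 0) + (if g = f then 1 else 0) := by
            simp [chi]
          rcases eq_or_ne g e with hge | hge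
          · subst hge
            rw [hval, if_pos rfl, if_pos rfl, if_neg hef, if_neg hef]
            rw [abs_of_nonneg (a := y g - 1 + 0 - z g) (by linarith),
              abs_of_nonneg (a := y g - z g) (by linarith)]
            ring
          · rcases eq_or_ne g f with hgf | hgf
            · subst hgf
              rw [hval, if_neg hge, if_pos rfl, if_neg hge, if_pos rfl]
              rw [abs_of_nonpos (a := y g - 0 + 1 - z g) (by linarith),
                abs_of_nonpos (a := y g - z g) (by linarith)]
              ring
            · rw [hval, if_neg hge, if_neg hgf, if_neg hge, if_neg hgf]
              ring_nf
        calc ∑ g : E, |(y - chi e + chi f) g - z g|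
            = ∑ g : E, (|y g - z g|
                + ((if g = e then (-1:ℤ) else 0) + (if g = f then (-1:ℤ) else 0))) :=
              Finset.sum_congr rfl fun g _ => hterm g
          _ = (∑ g : E, |y g - z g|) + (-1 + -1) := by
              rw [Finset.sum_add_distrib, Finset.sum_add_distrib]
              simp
          _ ≤ (n : ℤ) := by push_cast at hm ⊢; linarith
      exact ih _ hxB hy'U hmeas
  refine key (∑ g : E, |y0 g - z g|).toNat y0 hy0B hy0U
    (le_of_eq (Int.toNat_of_nonneg (Finset.sum_nonneg fun g _ => abs_nonneg _)).symm)

lemma interval_mem {B : Set (E → ℤ)} (hM : MConvex B) {z : E → ℤ} (hz : z ∈ B)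
    {e f : E} (hef : e ≠ f) {w : ℤ} (hw : z - w • chi f + w • chi e ∈ B) :
    ∀ α : ℤ, 0 ≤ α → α ≤ w → z - α • chi f + α • chi e ∈ B := by
  have key : ∀ n : ℕ, 0 ≤ w - n → z - (w - n) • chi f + (w - n) • chi e ∈ B := by
    intro n
    induction n with
    | zero => intro _; simpa using hw
    | succ n ih =>
      intro hn
      have hpos : (0:ℤ) < w - n := by push_cast at hn ⊢; linarith
      have hx := ih (le_of_lt hpos)
      have hxe : z e < (z - (w - n) • chi f + (w - n) • chi e) e := by
        simp [chi, hef]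
        linarith
      obtain ⟨f', hf', hxB, _⟩ := hM _ hx z hz e hxe
      have hff : f' = f := by
        by_contra hne
        have : z f' ≤ (z - (w - n) • chi f + (w - n) • chi e) f' := by
          simp [chi, hne]
          split_ifs <;> linarith
        linarith
      rw [hff] at hxB
      have heq : z - (w - n) • chi f + (w - n) • chi e - chi e + chi f
          = z - (w - (n+1:ℕ)) • chi f + (w - (n+1:ℕ)) • chi e := by
        funext g
        simp only [Pi.add_apply, Pi.sub_apply, Pi.smul_apply, smul_eq_mul]
        push_cast
        ring
      rwa [heq] at hxB
  intro α h0 hα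
  have hcast : ((w - α).toNat : ℤ) = w - α := Int.toNat_of_nonneg (by linarith)
  have := key (w - α).toNat (by rw [hcast]; linarith)
  rwa [hcast, show w - (w - α) = α by ring] at this

end Aux

/-- The level invariants (L1) and (L2) of the push-relabel algorithm are
maintained by both push and relabel operations. -/
theorem stmt9 {N : Type*} [Fintype N] [DecidableEq N]
    (b : E → ℤ) (B : N → Set (E → ℤ))
    (hBox : ∀ i, B i ⊆ Box b) (hM : ∀ i, MConvex (B i))
    (ρ : N → Finset E → ℤ) (hρ : ∀ i, IsRank (B i) (ρ i))
    (z : N → E → ℤ) (hz : ∀ i, z i ∈ B i)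
    (Θ : E → ℤ) (hΘ : ∀ e, 0 ≤ Θ e ∧ Θ e ≤ Fintype.card E)
    (T : N → E → Finset E) (hT : ∀ i, MinTightAt (ρ i) (z i) (T i))
    (h1 : LevelInv1 b z Θ) (h2 : LevelInv2 Θ T) :
    -- a push operation maintains the invariants
    (∀ (i : N) (e f : E) (w : ℤ),
      f ∈ T i e → Θ f = Θ e - 1 → (∑ j, z j e) < b e →
      IsGreatest {α : ℤ | z i - α • chi f + α • chi e ∈ B i} w →
      ∀ z' : N → E → ℤ,
        z' = Function.update z i
          (z i - (min (b e - ∑ j, z j e) w) • chi f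
               + (min (b e - ∑ j, z j e) w) • chi e) →
      ∀ T' : N → E → Finset E, (∀ j, MinTightAt (ρ j) (z' j) (T' j)) →
        LevelInv1 b z' Θ ∧ LevelInv2 Θ T') ∧
    -- a relabel operation maintains the invariants
    (∀ e : E, (∑ j, z j e) < b e → Θ e < Fintype.card E →
      (∀ (i : N) (f : E), f ∈ T i e → Θ f ≠ Θ e - 1) →
      LevelInv1 b z (Function.update Θ e (Θ e + 1)) ∧
      LevelInv2 (Function.update Θ e (Θ e + 1)) T ∧
      (∀ g, 0 ≤ Function.update Θ e (Θ e + 1) g ∧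
        Function.update Θ e (Θ e + 1) g ≤ Fintype.card E)) := by
  constructor
  · -- push
    intro i e f w hfT hΘf hlt hw z' hz' T' hT'
    set α := min (b e - ∑ j, z j e) w with hαdef
    have hzi' : z' i = z i - α • chi f + α • chi e := by rw [hz', Function.update_self]
    have hzj' : ∀ j, j ≠ i → z' j = z j := by
      intro j hj; rw [hz', Function.update_of_ne hj]
    have h0mem : (0:ℤ) ∈ {α : ℤ | z i - α • chi f + α • chi e ∈ B i} := by
      have hzero : z i - (0:ℤ) • chi f + (0:ℤ) • chi e = z i := by
        funext g; simp
      show z i - (0:ℤ) • chi f + (0:ℤ) • chi e ∈ B i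
      rw [hzero]; exact hz i
    have hw0 : (0:ℤ) ≤ w := hw.2 h0mem
    have hα0 : 0 ≤ α := le_min (by linarith) hw0
    have hαw : α ≤ w := min_le_right _ _
    have hαe : α ≤ b e - ∑ j, z j e := min_le_left _ _
    have hziB : z' i ∈ B i := by
      rcases eq_or_ne e f with hef | hef
      · rw [hzi']
        have : z i - α • chi f + α • chi e = z i := by
          subst hef; funext g; simp
        rw [this]; exact hz i
      · rw [hzi']
        exact interval_mem (hM i) (hz i) hef hw.1 α hα0 hαw
    have hz'B : ∀ j, z' j ∈ B j := by
      intro j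
      rcases eq_or_ne j i with hj | hj
      · subst hj; exact hziB
      · rw [hzj' j hj]; exact hz j
    -- the new total allocation
    have hsum : ∀ g, ∑ j, z' j g
        = ∑ j, z j g + α * ((if g = e then 1 else 0) - (if g = f then 1 else 0)) := by
      intro g
      have h2' : ∑ j, (z' j g - z j g) = z' i g - z i g := by
        apply Finset.sum_eq_single_of_mem i (mem_univ i)
        intro j _ hj; rw [hzj' j hj]; ring
      have h1' : ∑ j, z' j g - ∑ j, z j g = z' i g - z i g := by
        rw [← Finset.sum_sub_distrib]; exact h2'
      have h3' : z' i g - z i g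
          = α * ((if g = e then 1 else 0) - (if g = f then 1 else 0)) := by
        rw [hzi']
        simp only [Pi.add_apply, Pi.sub_apply, Pi.smul_apply, smul_eq_mul, chi]
        split_ifs <;> ring
      linarith
    constructor
    · -- LevelInv1
      intro g hg
      rw [hsum g] at hg
      rcases eq_or_ne g e with hge | hge
      · rcases eq_or_ne g f with hgf | hgf
        · rw [if_pos hge, if_pos hgf] at hg
          subst hge
          exact h1 g (by linarith)
        · rw [if_pos hge, if_neg hgf] at hg
          subst hge
          linarith
      · rcases eq_or_ne g f with hgf | hgf
        · rw [if_neg hge, if_pos hgf] at hg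
          exact h1 g (by linarith)
        · rw [if_neg hge, if_neg hgf] at hg
          exact h1 g (by linarith)
    · -- LevelInv2
      intro j g h hh
      rcases eq_or_ne j i with hj | hj
      · subst hj
        -- U = T j g ∪ T j e is tight for both z j and z' j
        have hUt : Tight (ρ j) (z j) (T j g ∪ T j e) :=
          tight_union (hM j) (hρ j) (hz j) ((hT j) g).2.1 ((hT j) e).2.1
        have heU : e ∈ T j g ∪ T j e := Finset.mem_union_right _ ((hT j) e).1
        have hfU : f ∈ T j g ∪ T j e := Finset.mem_union_right _ hfT
        have hgU : g ∈ T j g ∪ T j e := Finset.mem_union_left _ ((hT j) g).1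
        have hUt' : Tight (ρ j) (z' j) (T j g ∪ T j e) := by
          unfold Tight
          rw [hzi', sum_shift, if_pos hfU, if_pos heU]
          have := hUt
          unfold Tight at this
          linarith
        have hsub : T' j g ⊆ T j g ∪ T j e := ((hT' j) g).2.2 _ hgU hUt'
        by_cases hTg : Tight (ρ j) (z' j) (T j g)
        · have hsub' : T' j g ⊆ T j g := ((hT' j) g).2.2 _ ((hT j) g).1 hTg
          exact h2 j g h (hsub' hh)
        · -- then f ∈ T j g, so Θ g ≤ Θ e
          have hfTg : f ∈ T j g := by
            by_contra hf
            apply hTg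
            have hle := le_rank (hρ j) hziB (T j g)
            rw [hzi', sum_shift, if_neg hf] at hle
            have htig := ((hT j) g).2.1
            unfold Tight at htig
            unfold Tight
            rw [hzi', sum_shift, if_neg hf]
            split_ifs at hle ⊢ with he' <;> linarith
          have hgle : Θ g ≤ Θ e := by
            have := h2 j g f hfTg
            linarith
          rcases Finset.mem_union.1 (hsub hh) with hh' | hh'
          · exact h2 j g h hh'
          · have := h2 j e h hh'
            linarith
      · -- buyer unchanged: T' j = T j
        have hTT : T j = T' j := by
          apply minTight_unique (hT j)
          have := hT' j
          rwa [hzj' j hj] at this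
        rw [← hTT] at hh
        exact h2 j g h hh
  · -- relabel
    intro e hlt hcard hpush
    refine ⟨?_, ?_, ?_⟩
    · intro g hg
      rcases eq_or_ne g e with hge | hge
      · subst hge; linarith
      · rw [Function.update_of_ne hge]
        exact h1 g hg
    · intro i g f hf
      rcases eq_or_ne g e with hge | hge
      · subst hge
        have hle := h2 i g f hf
        have hne := hpush i f hf
        rcases eq_or_ne f g with hfg | hfg
        · subst hfg
          simp
        · rw [Function.update_self, Function.update_of_ne hfg]
          omega
      · rw [Function.update_of_ne hge]
        rcases eq_or_ne f e with hfe | hfe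
        · subst hfe
          rw [Function.update_self]
          have := h2 i g f hf
          linarith
        · rw [Function.update_of_ne hfe]
          exact h2 i g f hf
    · intro g
      rcases eq_or_ne g e with hge | hge
      · subst hge
        rw [Function.update_self]
        have := (hΘ g).1
        constructor <;> linarith
      · rw [Function.update_of_ne hge]
        exact hΘ g
end

section
/- If the push-relabel algorithm for polymatroid sum terminates (i.e., every undersold item e has Θ(e) = m) while maintaining the level invariants (L1) and (L2), then the resulting allocation z = (z_1,…,z_n) is an optimal solution to the polymatroid sum problem max Σ_e min{Σ_i z_i(e), b(e)}. -/
open Finset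

variable {E : Type*} [Fintype E] [DecidableEq E]

/-- If the push-relabel algorithm terminates (every undersold item has level `m`)
while the level invariants hold, the allocation is an optimal solution to the
polymatroid sum problem. -/
theorem stmt10 {N : Type*} [Fintype N]
    (b : E → ℤ) (B : N → Set (E → ℤ))
    (hBox : ∀ i, B i ⊆ Box b) (hM : ∀ i, MConvex (B i))
    (ρ : N → Finset E → ℤ) (hρ : ∀ i, IsRank (B i) (ρ i))
    (z : N → E → ℤ) (hz : ∀ i, z i ∈ B i)
    (Θ : E → ℤ) (hΘ : ∀ e, 0 ≤ Θ e ∧ Θ e ≤ Fintype.card E)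
    (T : N → E → Finset E) (hT : ∀ i, MinTightAt (ρ i) (z i) (T i))
    (h1 : LevelInv1 b z Θ) (h2 : LevelInv2 Θ T)
    (hterm : ∀ e, (∑ i, z i e) < b e → Θ e = Fintype.card E) :
    ∀ z' : N → E → ℤ, (∀ i, z' i ∈ B i) →
      ∑ e : E, min (∑ i, z' i e) (b e) ≤ ∑ e : E, min (∑ i, z i e) (b e) := by
  intro z' hz'
  -- find an empty level ℓ ∈ [0, m]
  obtain ⟨ℓ, hℓmem, hℓ⟩ :
      ∃ ℓ ∈ Finset.Icc (0:ℤ) (Fintype.card E), ∀ e, Θ e ≠ ℓ := by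
    by_contra h
    push_neg at h
    have hsub : Finset.Icc (0:ℤ) (Fintype.card E) ⊆ Finset.image Θ Finset.univ := by
      intro ℓ hℓ
      obtain ⟨e, he⟩ := h ℓ hℓ
      exact Finset.mem_image.2 ⟨e, Finset.mem_univ e, he⟩
    have hc1 := Finset.card_le_card hsub
    have hc2 : (Finset.image Θ Finset.univ).card ≤ Fintype.card E :=
      Finset.card_image_le.trans (le_of_eq Finset.card_univ)
    have hc3 : ((Fintype.card E : ℤ) + 1 - 0).toNat ≤ Fintype.card E := by
      rw [← Int.card_Icc]; exact hc1.trans hc2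
    omega
  obtain ⟨hℓ0, hℓm⟩ := Finset.mem_Icc.1 hℓmem
  set S : Finset E := Finset.univ.filter (fun e => ℓ ≤ Θ e) with hSdef
  have hmemS : ∀ e, e ∈ S ↔ ℓ ≤ Θ e := by
    intro e; simp [hSdef]
  have hSup : ∀ e ∈ S, ℓ + 1 ≤ Θ e := by
    intro e he
    have := (hmemS e).1 he
    have := hℓ e
    omega
  -- key: z i maximizes the sum over S within B i
  have key : ∀ (i : N) (y : E → ℤ), y ∈ B i → ∑ g ∈ S, y g ≤ ∑ g ∈ S, z i g := by
    intro i
    suffices h : ∀ n : ℕ, ∀ y : E → ℤ, y ∈ B i →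
        (∑ g : E, (y g - z i g).natAbs) ≤ n → ∑ g ∈ S, y g ≤ ∑ g ∈ S, z i g by
      intro y hy; exact h _ y hy le_rfl
    intro n
    induction n with
    | zero =>
      intro y hy h0
      refine le_of_eq (Finset.sum_congr rfl fun g _ => ?_)
      have hg : (y g - z i g).natAbs ≤ ∑ g : E, (y g - z i g).natAbs :=
        Finset.single_le_sum (f := fun g => (y g - z i g).natAbs)
          (fun _ _ => Nat.zero_le _) (Finset.mem_univ g)
      omega
    | succ n ih =>
      intro y hy hμ
      by_cases hle : ∑ g ∈ S, y g ≤ ∑ g ∈ S, z i g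
      · exact hle
      push_neg at hle
      obtain ⟨e, heS, he⟩ := Finset.exists_lt_of_sum_lt hle
      obtain ⟨f, hf1, hf2, hf3⟩ := hM i y hy (z i) (hz i) e he
      have hef : e ≠ f := by rintro rfl; omega
      have hfT : f ∈ T i e := by
        by_contra hfT
        have heT := (hT i e).1
        have htight := (hT i e).2.1
        have hub : ∑ g ∈ T i e, (z i + chi e - chi f) g ≤ ρ i (T i e) :=
          (hρ i (T i e)).2 ⟨_, hf3, rfl⟩
        have hsum : ∑ g ∈ T i e, (z i + chi e - chi f) g
            = (∑ g ∈ T i e, z i g) + 1 := by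
          simp only [Pi.add_apply, Pi.sub_apply, chi, Finset.sum_add_distrib,
            Finset.sum_sub_distrib, Finset.sum_ite_eq', heT, hfT, if_pos, if_neg,
            if_true, if_false]
          ring
        rw [hsum] at hub
        rw [Tight] at htight
        omega
      have hfS : f ∈ S := by
        rw [hmemS]
        have := h2 i e f hfT
        have := hSup e heS
        omega
      have hval : ∀ g, (y - chi e + chi f) g
          = y g - (if g = e then 1 else 0) + (if g = f then 1 else 0) := by
        intro g; simp [chi]
      have hμ' : ∑ g : E, ((y - chi e + chi f) g - z i g).natAbs
          < ∑ g : E, (y g - z i g).natAbs := by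
        apply Finset.sum_lt_sum
        · intro g _
          rw [hval g]
          by_cases hge : g = e
          · subst hge; rw [if_pos rfl, if_neg hef]; omega
          · by_cases hgf : g = f
            · subst hgf; rw [if_neg hge, if_pos rfl]; omega
            · rw [if_neg hge, if_neg hgf]; omega
        · refine ⟨e, Finset.mem_univ e, ?_⟩
          rw [hval e, if_pos rfl, if_neg hef]
          omega
      have hrec := ih (y - chi e + chi f) hf2 (by omega)
      have hsS : ∑ g ∈ S, (y - chi e + chi f) g = ∑ g ∈ S, y g := by
        simp only [hval, Finset.sum_add_distrib, Finset.sum_sub_distrib,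
          Finset.sum_ite_eq', heS, hfS, if_pos, if_true]
        ring
      omega
  -- not oversold on S, not undersold off S
  have hS1 : ∀ e ∈ S, ∑ i, z i e ≤ b e := by
    intro e he
    by_contra hcon
    push_neg at hcon
    have := h1 e hcon
    have := hSup e he
    omega
  have hS2 : ∀ e ∈ Sᶜ, b e ≤ ∑ i, z i e := by
    intro e he
    by_contra hcon
    push_neg at hcon
    have h3 := hterm e hcon
    have h4 : ¬ (ℓ ≤ Θ e) := by
      intro hh
      exact (Finset.mem_compl.1 he) ((hmemS e).2 hh)
    omega
  have hsplit : ∀ w : E → ℤ, ∑ e : E, w e = ∑ e ∈ S, w e + ∑ e ∈ Sᶜ, w e := by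
    intro w
    rw [Finset.sum_add_sum_compl]
  calc ∑ e : E, min (∑ i, z' i e) (b e)
      = ∑ e ∈ S, min (∑ i, z' i e) (b e) + ∑ e ∈ Sᶜ, min (∑ i, z' i e) (b e) :=
        hsplit _
    _ ≤ ∑ e ∈ S, (∑ i, z' i e) + ∑ e ∈ Sᶜ, b e := by
        gcongr with e he e he
        · exact min_le_left _ _
        · exact min_le_right _ _
    _ ≤ ∑ e ∈ S, (∑ i, z i e) + ∑ e ∈ Sᶜ, b e := by
        gcongr ?_ + _
        rw [Finset.sum_comm, Finset.sum_comm (s := S)]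
        exact Finset.sum_le_sum fun i _ => key i (z' i) (hz' i)
    _ = ∑ e ∈ S, min (∑ i, z i e) (b e) + ∑ e ∈ Sᶜ, min (∑ i, z i e) (b e) := by
        congr 1
        · exact Finset.sum_congr rfl fun e he => (min_eq_left (hS1 e he)).symm
        · exact Finset.sum_congr rfl fun e he => (min_eq_right (hS2 e he)).symm
    _ = ∑ e : E, min (∑ i, z i e) (b e) := (hsplit _).symm
end

section
/- In the push-relabel algorithm with the lexicographic selection rule (all pushes executed with respect to the minimal suitable exchange item), for fixed item e at level ℓ and fixed buyer i, the quantity min{f : f ∈ T_i(e), Θ(f) = ℓ − 1} is monotonically non-decreasing across all push and relabel operations as long as Θ(e) remains ℓ, and it strictly increases at every saturating push at e with respect to f and i. -/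
open Finset

variable {E : Type*} [Fintype E] [DecidableEq E]

/-- The candidate for a push at `e` w.r.t. buyer `i`: the minimal item of
`T_i(e)` on level `Θ(e) − 1` (`⊤` if there is none). -/
def pushCand [LinearOrder E] (T : E → Finset E) (Θ : E → ℤ) (e : E) : WithTop E :=
  ((T e).filter (fun f => Θ f = Θ e - 1)).min

section Aux

set_option linter.unusedSectionVars false

@[simp] lemma chi_apply (e f : E) : chi e f = if f = e then 1 else 0 := rfl

variable {B : Set (E → ℤ)}

lemma depTrans (hM : MConvex B) {z : E → ℤ} (hz : z ∈ B) {e u v : E}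
    (h1 : z + chi e - chi u ∈ B) (h2 : z + chi u - chi v ∈ B) :
    z + chi e - chi v ∈ B := by
  by_cases heu : e = u
  · subst heu; exact h2
  by_cases huv : u = v
  · subst huv; exact h1
  by_cases hev : e = v
  · subst hev; simpa using hz
  have hxu : (z + chi e - chi u) u < (z + chi u - chi v) u := by
    simp [heu, huv, Ne.symm heu]
  obtain ⟨x, hx1, hx2, hx3⟩ := hM _ h2 _ h1 u hxu
  by_cases hxe : x = e
  · have hrw : z + chi u - chi v - chi u + chi x = z + chi x - chi v := by abel
    rw [hrw, hxe] at hx2; exact hx2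
  by_cases hxv : x = v
  · have hrw : z + chi e - chi u + chi u - chi x = z + chi e - chi x := by abel
    rw [hrw, hxv] at hx3; exact hx3
  · exfalso
    rcases eq_or_ne x u with rfl | hxu'
    · simp [heu, huv, Ne.symm heu] at hx1; omega
    · simp [hxe, hxv, hxu'] at hx1

lemma stepDown (hM : MConvex B) {z : E → ℤ} (hz : z ∈ B) {k g : E} (hkg : k ≠ g)
    {n : ℕ} (h : z + (n + 1) • (chi k - chi g) ∈ B) : z + n • (chi k - chi g) ∈ B := by
  have hk : z k < (z + (n + 1) • (chi k - chi g)) k := by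
    simp [hkg]
  obtain ⟨v, hv1, hv2, _⟩ := hM _ h _ hz k hk
  have hvg : v = g := by
    by_contra hvg
    rcases eq_or_ne v k with rfl | hvk
    · simp [hkg] at hv1; omega
    · simp [hvg, hvk] at hv1
  rw [hvg] at hv2
  have hrw : z + (n + 1) • (chi k - chi g) - chi k + chi g = z + n • (chi k - chi g) := by
    rw [succ_nsmul]; abel
  rwa [hrw] at hv2

lemma memOfLe (hM : MConvex B) {z : E → ℤ} (hz : z ∈ B) {k g : E} (hkg : k ≠ g)
    {n : ℕ} (h : z + n • (chi k - chi g) ∈ B) : ∀ m ≤ n, z + m • (chi k - chi g) ∈ B := by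
  induction n with
  | zero => intro m hm; simpa [Nat.le_zero.mp hm] using h
  | succ n ih =>
    intro m hm
    rcases Nat.eq_or_lt_of_le hm with rfl | hlt
    · exact h
    · exact ih (stepDown hM hz hkg h) m (by omega)

lemma qDescent (hM : MConvex B) {z : E → ℤ} (hz : z ∈ B) {k g f : E}
    (hkg : k ≠ g) (hkf : k ≠ f) (hgf : g ≠ f) :
    ∀ (β : ℕ), z + (β + 1) • chi k - β • chi g - chi f ∈ B → z + chi k - chi f ∈ B := by
  intro β
  induction β with
  | zero => intro h; simpa using h
  | succ β ih =>
    intro h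
    have hk : z k < (z + (β + 1 + 1) • chi k - (β + 1) • chi g - chi f) k := by
      simp [hkg, hkf]; omega
    obtain ⟨v, hv1, hv2, hv3⟩ := hM _ h _ hz k hk
    by_cases hvf : v = f
    · rw [hvf] at hv3; exact hv3
    by_cases hvg : v = g
    · rw [hvg] at hv2
      have hrw : z + (β + 1 + 1) • chi k - (β + 1) • chi g - chi f - chi k + chi g
          = z + (β + 1) • chi k - β • chi g - chi f := by
        rw [succ_nsmul, succ_nsmul (chi g)]; abel
      exact ih (by rwa [hrw] at hv2)
    · exfalso
      rcases eq_or_ne v k with rfl | hvk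
      · simp [hkg, hkf] at hv1; omega
      · simp [hvf, hvg, hvk] at hv1

lemma sLemma (hM : MConvex B) {z : E → ℤ} (hz : z ∈ B) {k g e : E}
    (hek : e ≠ k) (heg : e ≠ g) (hkg : k ≠ g)
    {β : ℕ} (h : z + β • chi k - (β + 1) • chi g + chi e ∈ B) : z + chi e - chi g ∈ B := by
  have he : z e < (z + β • chi k - (β + 1) • chi g + chi e) e := by
    simp [hek, heg, Ne.symm hek, Ne.symm heg]
  obtain ⟨v, hv1, hv2, hv3⟩ := hM _ h _ hz e he
  have hvg : v = g := by
    by_contra hvg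
    rcases eq_or_ne v k with rfl | hvk
    · simp [Ne.symm hek, hkg] at hv1; omega
    rcases eq_or_ne v e with rfl | hve
    · simp [hek, heg] at hv1
    · simp [hvg, hvk, hve] at hv1
  rw [hvg] at hv3
  exact hv3

lemma pushDep (hM : MConvex B) {z : E → ℤ} (hz : z ∈ B) {k g e f : E}
    (hkg : k ≠ g) (hfe : f ≠ e) {n : ℕ}
    (hp : z + n • (chi k - chi g) + chi e - chi f ∈ B)
    (hnf : z + chi e - chi f ∉ B) :
    e ≠ k ∧ (g = e ∨ z + chi e - chi g ∈ B) ∧ (f = k ∨ z + chi k - chi f ∈ B) := by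
  obtain _ | m := n
  · exact absurd (by simpa using hp) hnf
  by_cases hek : e = k
  · exfalso
    rw [hek] at hp hnf
    by_cases hfg : f = g
    · rw [hfg] at hp hnf
      have hrw : z + (m + 1) • (chi k - chi g) + chi k - chi g
          = z + (m + 2) • (chi k - chi g) := by
        rw [succ_nsmul (chi k - chi g) (m + 1)]; abel
      have h2 := memOfLe hM hz hkg (by rwa [hrw] at hp) 1 (by omega)
      refine hnf ?_
      have hrw2 : z + chi k - chi g = z + (chi k - chi g) := by abel
      rw [hrw2]
      simpa using h2
    · have hrw : z + (m + 1) • (chi k - chi g) + chi k - chi f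
          = z + (m + 1 + 1) • chi k - (m + 1) • chi g - chi f := by
        rw [smul_sub, succ_nsmul (chi k) (m + 1)]; abel
      have hkf : k ≠ f := fun h => hfe (h.symm.trans hek.symm)
      exact hnf (qDescent hM hz hkg hkf (Ne.symm hfg) (m + 1) (by rwa [hrw] at hp))
  by_cases heg : e = g
  · rw [heg] at hp
    by_cases hfk : f = k
    · exact ⟨hek, Or.inl heg.symm, Or.inl hfk⟩
    · have hrw : z + (m + 1) • (chi k - chi g) + chi g - chi f
          = z + (m + 1) • chi k - m • chi g - chi f := by
        rw [smul_sub, succ_nsmul (chi g) m]; abel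
      have hgf : g ≠ f := fun h => hfe (h.symm.trans heg.symm)
      exact ⟨hek, Or.inl heg.symm,
        Or.inr (qDescent hM hz hkg (Ne.symm hfk) hgf m (by rwa [hrw] at hp))⟩
  by_cases hfk : f = k
  · rw [hfk] at hp
    have hrw : z + (m + 1) • (chi k - chi g) + chi e - chi k
        = z + m • chi k - (m + 1) • chi g + chi e := by
      rw [smul_sub, succ_nsmul (chi k) m]; abel
    exact ⟨hek, Or.inr (sLemma hM hz hek heg hkg (by rwa [hrw] at hp)), Or.inl hfk⟩
  by_cases hfg : f = g
  · rw [hfg] at hp hnf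
    have hrw : z + (m + 1) • (chi k - chi g) + chi e - chi g
        = z + (m + 1) • chi k - (m + 1 + 1) • chi g + chi e := by
      rw [smul_sub, succ_nsmul (chi g) (m + 1)]; abel
    exact absurd (sLemma hM hz hek heg hkg (by rwa [hrw] at hp)) hnf
  · have he : z e < (z + (m + 1) • (chi k - chi g) + chi e - chi f) e := by
      simp [hek, heg, Ne.symm hfe]
    obtain ⟨v, hv1, hv2, hv3⟩ := hM _ hp _ hz e he
    have hvcases : v = g ∨ v = f := by
      by_contra hc
      push_neg at hc
      obtain ⟨hvg, hvf⟩ := hc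
      rcases eq_or_ne v k with rfl | hvk
      · simp [hkg, Ne.symm hek, hvf] at hv1; omega
      rcases eq_or_ne v e with rfl | hve
      · simp [hek, heg, Ne.symm hfe] at hv1
      · simp [hvg, hvf, hvk, hve] at hv1
    cases hvcases with
    | inl hvg =>
      rw [hvg] at hv2 hv3
      have hrw : z + (m + 1) • (chi k - chi g) + chi e - chi f - chi e + chi g
          = z + (m + 1) • chi k - m • chi g - chi f := by
        rw [smul_sub, succ_nsmul (chi g) m]; abel
      exact ⟨hek, Or.inr hv3,
        Or.inr (qDescent hM hz hkg (Ne.symm hfk) (Ne.symm hfg) m (by rwa [hrw] at hv2))⟩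
    | inr hvf =>
      rw [hvf] at hv3
      exact absurd hv3 hnf

lemma sum_chi (S : Finset E) (u : E) : ∑ x ∈ S, chi u x = if u ∈ S then 1 else 0 := by
  simp only [chi_apply]
  rw [Finset.sum_ite_eq' S u (fun _ => (1 : ℤ))]

lemma depSum_le (hM : MConvex B) {z : E → ℤ} (hz : z ∈ B) (e : E)
    (D : Finset E) (hD : ∀ v, v ∈ D ↔ (v = e ∨ z + chi e - chi v ∈ B)) :
    ∀ (N : ℕ) (y : E → ℤ), y ∈ B → (∑ u, (y u - z u).natAbs) ≤ N →
      ∑ u ∈ D, y u ≤ ∑ u ∈ D, z u := by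
  intro N
  induction N with
  | zero =>
    intro y hy hN
    have : ∀ u, y u = z u := by
      intro u
      have := Finset.sum_eq_zero_iff.mp (Nat.le_zero.mp hN) u (mem_univ u)
      omega
    exact le_of_eq (Finset.sum_congr rfl fun u _ => this u)
  | succ N ih =>
    intro y hy hN
    by_cases hle : ∀ u ∈ D, y u ≤ z u
    · exact Finset.sum_le_sum hle
    push_neg at hle
    obtain ⟨u, huD, hu⟩ := hle
    obtain ⟨v, hv1, hv2, hv3⟩ := hM _ hy _ hz u hu
    have hvu : v ≠ u := fun h => by rw [h] at hv1; omega
    have hvD : v ∈ D := by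
      rcases (hD u).mp huD with rfl | hdep
      · exact (hD v).mpr (Or.inr hv3)
      · exact (hD v).mpr (Or.inr (depTrans hM hz hdep hv3))
    set y' := y - chi u + chi v with hy'
    have hsum : ∑ x ∈ D, y' x = ∑ x ∈ D, y x := by
      simp only [hy', Pi.add_apply, Pi.sub_apply]
      rw [Finset.sum_add_distrib, Finset.sum_sub_distrib, sum_chi, sum_chi,
        if_pos huD, if_pos hvD]
      ring
    have hmeas : (∑ x, (y' x - z x).natAbs) ≤ N := by
      have hlt : (∑ x, (y' x - z x).natAbs) < ∑ x, (y x - z x).natAbs := by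
        apply Finset.sum_lt_sum
        · intro x _
          simp only [hy', Pi.add_apply, Pi.sub_apply, chi_apply]
          rcases eq_or_ne x u with rfl | hxu
          · simp [hvu.symm, Ne.symm hvu]; omega
          · rcases eq_or_ne x v with rfl | hxv
            · simp [hxu]; omega
            · simp [hxu, hxv]
        · refine ⟨u, mem_univ u, ?_⟩
          simp only [hy', Pi.add_apply, Pi.sub_apply, chi_apply]
          simp [Ne.symm hvu]; omega
      omega
    calc ∑ x ∈ D, y x = ∑ x ∈ D, y' x := hsum.symm
      _ ≤ ∑ x ∈ D, z x := ih y' hv2 hmeas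

lemma mem_minTight_iff (hM : MConvex B) {ρ : Finset E → ℤ} (hρ : IsRank B ρ)
    {z : E → ℤ} (hz : z ∈ B) {T : E → Finset E} (hT : MinTightAt ρ z T) (e f : E) :
    f ∈ T e ↔ (f = e ∨ z + chi e - chi f ∈ B) := by
  classical
  constructor
  · intro hf
    by_cases hfe : f = e
    · exact Or.inl hfe
    right
    set D : Finset E := univ.filter (fun v => v = e ∨ z + chi e - chi v ∈ B) with hDdef
    have hD : ∀ v, v ∈ D ↔ (v = e ∨ z + chi e - chi v ∈ B) := by
      intro v; simp [hDdef]
    have htight : Tight ρ z D := by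
      obtain ⟨⟨y₀, hy₀B, hy₀s⟩, hub⟩ := hρ D
      have h1 : ∑ u ∈ D, z u ≤ ρ D := hub ⟨z, hz, rfl⟩
      have h2 : ρ D ≤ ∑ u ∈ D, z u := by
        rw [← hy₀s]
        exact depSum_le hM hz e D hD _ y₀ hy₀B le_rfl
      exact le_antisymm h1 h2
    have hsub := (hT e).2.2 D ((hD e).mpr (Or.inl rfl)) htight
    rcases (hD f).mp (hsub hf) with h | h
    · exact absurd h hfe
    · exact h
  · intro hor
    rcases hor with hfe | hdep
    · rw [hfe]; exact (hT e).1
    · by_contra hfT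
      have hS := hT e
      have hS21 : ∑ u ∈ T e, z u = ρ (T e) := hS.2.1
      have hup : ∑ u ∈ T e, (z + chi e - chi f) u ≤ ρ (T e) := (hρ (T e)).2 ⟨_, hdep, rfl⟩
      have hcomp : ∑ u ∈ T e, (z + chi e - chi f) u = ∑ u ∈ T e, z u + 1 := by
        simp only [Pi.add_apply, Pi.sub_apply]
        rw [sum_sub_distrib, sum_add_distrib, sum_chi, sum_chi, if_pos hS.1, if_neg hfT]
        ring
      rw [hcomp, hS21] at hup
      omega

lemma coe_lt_finset_min [LinearOrder E] {s : Finset E} {g : E} (h : ∀ x ∈ s, g < x) :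
    (g : WithTop E) < s.min := by
  rcases s.eq_empty_or_nonempty with rfl | hne
  · rw [Finset.min_empty]; exact WithTop.coe_lt_top g
  · obtain ⟨m, hm⟩ := Finset.min_of_nonempty hne
    rw [hm]
    exact WithTop.coe_lt_coe.mpr (h m (Finset.mem_of_min hm))

lemma minTight_eq {ρ : Finset E → ℤ} {z : E → ℤ} {T T' : E → Finset E}
    (hT : MinTightAt ρ z T) (hT' : MinTightAt ρ z T') : ∀ e, T e = T' e := fun e =>
  Finset.Subset.antisymm ((hT e).2.2 _ (hT' e).1 (hT' e).2.1)
    ((hT' e).2.2 _ (hT e).1 (hT e).2.1)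

end Aux

/-- Lexicographic monotonicity: for a fixed item `e` and buyer `i`, the minimal
candidate item `min {f ∈ T_i(e) : Θ(f) = Θ(e) − 1}` does not decrease under relabel
operations at other items nor under pushes executed w.r.t. the minimal suitable
item, and it strictly increases at every saturating push at `e` w.r.t. `i`. -/


theorem stmt11 {N : Type*} [Fintype N] [DecidableEq N] [LinearOrder E]
    (b : E → ℤ) (B : N → Set (E → ℤ))
    (hBox : ∀ i, B i ⊆ Box b) (hM : ∀ i, MConvex (B i))
    (ρ : N → Finset E → ℤ) (hρ : ∀ i, IsRank (B i) (ρ i))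
    (z : N → E → ℤ) (hz : ∀ i, z i ∈ B i)
    (Θ : E → ℤ) (hΘ : ∀ e, 0 ≤ Θ e ∧ Θ e ≤ Fintype.card E)
    (T : N → E → Finset E) (hT : ∀ i, MinTightAt (ρ i) (z i) (T i))
    (h1 : LevelInv1 b z Θ) (h2 : LevelInv2 Θ T)
    (e : E) (i : N) :
    -- a relabel operation at an item `g ≠ e` does not decrease the candidate
    (∀ g : E, g ≠ e → (∑ j, z j g) < b g → Θ g < Fintype.card E →
      (∀ (j : N) (f : E), f ∈ T j g → Θ f ≠ Θ g - 1) →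
      pushCand (T i) Θ e ≤
        pushCand (T i) (Function.update Θ g (Θ g + 1)) e) ∧
    -- a push at `k` w.r.t. buyer `j` and the minimal suitable item `g`
    (∀ (k g : E) (j : N) (w : ℤ),
      g ∈ T j k → Θ g = Θ k - 1 →
      (∀ g' ∈ T j k, Θ g' = Θ k - 1 → g ≤ g') →
      (∑ l, z l k) < b k →
      IsGreatest {α : ℤ | z j - α • chi g + α • chi k ∈ B j} w →
      ∀ z' : N → E → ℤ,
        z' = Function.update z j
          (z j - (min (b k - ∑ l, z l k) w) • chi g
               + (min (b k - ∑ l, z l k) w) • chi k) →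
      ∀ T' : N → E → Finset E, (∀ l, MinTightAt (ρ l) (z' l) (T' l)) →
        pushCand (T i) Θ e ≤ pushCand (T' i) Θ e ∧
        (k = e → j = i → min (b k - ∑ l, z l k) w = w →
          pushCand (T i) Θ e < pushCand (T' i) Θ e)) := by
  classical
  constructor
  · -- relabel
    intro g hge hsumg hcard hno
    unfold pushCand
    apply Finset.min_mono
    intro f hf
    rw [mem_filter] at hf ⊢
    obtain ⟨hfT, hfΘ⟩ := hf
    have heg : e ≠ g := Ne.symm hge
    rw [Function.update_of_ne heg] at hfΘ
    refine ⟨hfT, ?_⟩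
    by_cases hfg : f = g
    · exfalso
      rw [hfg, Function.update_self] at hfΘ
      have hl2 := h2 i e g (hfg ▸ hfT)
      omega
    · rw [Function.update_of_ne hfg] at hfΘ
      exact hfΘ
  · -- push
    intro k g j w hgTk hΘg hgmin hslack hw z' hz'def T' hT'
    set α := min (b k - ∑ l, z l k) w with hα
    have hw0 : (0 : ℤ) ≤ w := by
      refine hw.2 ?_
      show z j - (0 : ℤ) • chi g + (0 : ℤ) • chi k ∈ B j
      simpa using hz j
    have hαw : α ≤ w := min_le_right _ _
    have hα0 : 0 ≤ α := le_min (by linarith) hw0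
    set n := α.toNat with hn
    have hnα : (n : ℤ) = α := Int.toNat_of_nonneg hα0
    have hkg : k ≠ g := fun h => by rw [h] at hΘg; omega
    have hcast : ∀ (c : ℤ) (zz : E → ℤ), zz - c • chi g + c • chi k = zz + c • (chi k - chi g) := by
      intro c zz; rw [smul_sub]; abel
    have hz'j : z' j = z j + n • (chi k - chi g) := by
      rw [hz'def, Function.update_self, hcast, ← hnα, natCast_zsmul]
    have hwB : z j + w.toNat • (chi k - chi g) ∈ B j := by
      have hmem := hw.1
      rw [Set.mem_setOf_eq, hcast] at hmem
      rwa [← Int.toNat_of_nonneg hw0, natCast_zsmul] at hmem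
    have hz'jB : z' j ∈ B j := by
      rw [hz'j]
      exact memOfLe (hM j) (hz j) hkg hwB n (Int.toNat_le_toNat hαw)
    have hz'other : ∀ l, l ≠ j → z' l = z l := by
      intro l hl
      rw [hz'def, Function.update_of_ne hl]
    by_cases hij : j = i
    · subst hij
      have hdepT : ∀ (e' f : E), f ∈ T j e' ↔ (f = e' ∨ z j + chi e' - chi f ∈ B j) :=
        mem_minTight_iff (hM j) (hρ j) (hz j) (hT j)
      have hdepT' : ∀ e' f, f ∈ T' j e' ↔ (f = e' ∨ z' j + chi e' - chi f ∈ B j) :=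
        mem_minTight_iff (hM j) (hρ j) hz'jB (hT' j)
      have key : ∀ f, f ∈ T' j e → Θ f = Θ e - 1 →
          (z j + chi e - chi f ∈ B j ∧ f ∈ T j e) ∨
          (g ∈ T j e ∧ Θ g = Θ e - 1 ∧ g ≤ f ∧ e ≠ k) := by
        intro f hfT' hΘf
        have hfe : f ≠ e := fun h => by rw [h] at hΘf; omega
        have hdep' : z' j + chi e - chi f ∈ B j := by
          rcases (hdepT' e f).mp hfT' with h | h
          · exact absurd h hfe
          · exact h
        by_cases hfB : z j + chi e - chi f ∈ B j
        · exact Or.inl ⟨hfB, (hdepT e f).mpr (Or.inr hfB)⟩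
        · have hp : z j + n • (chi k - chi g) + chi e - chi f ∈ B j := by
            rwa [hz'j] at hdep'
          obtain ⟨hek, hg, hf⟩ := pushDep (hM j) (hz j) hkg hfe hp hfB
          have hgTe : g ∈ T j e := (hdepT e g).mpr hg
          have hfTk : f ∈ T j k := (hdepT k f).mpr hf
          have l1 := h2 j e g hgTe
          have l2 := h2 j k f hfTk
          have hΘg' : Θ g = Θ e - 1 := by omega
          have hΘfk : Θ f = Θ k - 1 := by omega
          exact Or.inr ⟨hgTe, hΘg', hgmin f hfTk hΘfk, hek⟩
      constructor
      · -- monotone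
        unfold pushCand
        apply Finset.le_min
        intro a ha
        rw [mem_filter] at ha
        rcases key a ha.1 ha.2 with ⟨_, haT⟩ | ⟨hgTe, hΘg', hga, _⟩
        · exact Finset.min_le (mem_filter.mpr ⟨haT, ha.2⟩)
        · calc ((T j e).filter (fun f => Θ f = Θ e - 1)).min
              ≤ (g : WithTop E) := Finset.min_le (mem_filter.mpr ⟨hgTe, hΘg'⟩)
            _ ≤ (a : WithTop E) := WithTop.coe_le_coe.mpr hga
      · -- strict
        intro hke _ hsat
        subst hke
        have hαw' : α = w := hsat
        have hgold : g ∈ (T j k).filter (fun f => Θ f = Θ k - 1) :=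
          mem_filter.mpr ⟨hgTk, hΘg⟩
        have holdle : pushCand (T j) Θ k ≤ (g : WithTop E) := Finset.min_le hgold
        have hnewgt : ∀ f ∈ (T' j k).filter (fun f => Θ f = Θ k - 1), g < f := by
          intro f hf
          rw [mem_filter] at hf
          obtain ⟨hfT', hΘf⟩ := hf
          have hfe : f ≠ k := fun h => by rw [h] at hΘf; omega
          have hdep' : z' j + chi k - chi f ∈ B j := by
            rcases (hdepT' k f).mp hfT' with h | h
            · exact absurd h hfe
            · exact h
          have hfB : z j + chi k - chi f ∈ B j := by
            by_contra hfB
            have hp : z j + n • (chi k - chi g) + chi k - chi f ∈ B j := by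
              rwa [hz'j] at hdep'
            obtain ⟨hek, _, _⟩ := pushDep (hM j) (hz j) hkg hfe hp hfB
            exact hek rfl
          have hfTk : f ∈ T j k := (hdepT k f).mpr (Or.inr hfB)
          have hgle : g ≤ f := hgmin f hfTk hΘf
          have hfg : f ≠ g := by
            intro h
            rw [h] at hdep'
            have hfeas : z j + (n + 1) • (chi k - chi g) ∈ B j := by
              have hrw : z' j + chi k - chi g = z j + (n + 1) • (chi k - chi g) := by
                rw [hz'j, succ_nsmul]; abel
              rwa [hrw] at hdep'
            have hmem : ((n : ℤ) + 1) ∈ {α : ℤ | z j - α • chi g + α • chi k ∈ B j} := by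
              show z j - ((n : ℤ) + 1) • chi g + ((n : ℤ) + 1) • chi k ∈ B j
              rw [hcast]
              rw [show ((n : ℤ) + 1) = ((n + 1 : ℕ) : ℤ) by push_cast; ring, natCast_zsmul]
              exact hfeas
            have hle := hw.2 hmem
            omega
          exact lt_of_le_of_ne hgle (Ne.symm hfg)
        refine lt_of_le_of_lt holdle ?_
        exact coe_lt_finset_min hnewgt
    · -- i ≠ j
      have hz'i : z' i = z i := hz'other i (fun h => hij h.symm)
      have hT'i : MinTightAt (ρ i) (z i) (T' i) := by
        have := hT' i
        rwa [hz'i] at this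
      have heq : ∀ e', T i e' = T' i e' := minTight_eq (hT i) hT'i
      constructor
      · unfold pushCand
        rw [heq e]
      · intro _ hji _
        exact absurd hji hij
end

section
/- In a market with strong gross substitutes valuations, a price vector p is Walrasian if and only if it is both packing and covering; in particular, if there is a packing allocation and a covering allocation at prices p, then there is a single allocation that is simultaneously packing and covering. -/
open Finset

variable {E : Type*} [Fintype E] [DecidableEq E]

/-- Quasi-linear utility of a bundle at prices `p`. -/
noncomputable def util (v : (E → ℤ) → ℤ) (p : E → ℝ) (z : E → ℤ) : ℝ :=
  (v z : ℝ) - ∑ e : E, p e * (z e : ℝ)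

/-- Demand set: utility-maximizing bundles in the box. -/
def Demand (b : E → ℤ) (v : (E → ℤ) → ℤ) (p : E → ℝ) : Set (E → ℤ) :=
  {z | z ∈ Box b ∧ ∀ y ∈ Box b, util v p y ≤ util v p z}

/-- Componentwise minimal preferred bundles. -/
def MinDemand (b : E → ℤ) (v : (E → ℤ) → ℤ) (p : E → ℝ) : Set (E → ℤ) :=
  {z | z ∈ Demand b v p ∧ ∀ y ∈ Demand b v p, y ≤ z → y = z}

/-- Componentwise maximal preferred bundles. -/
def MaxDemand (b : E → ℤ) (v : (E → ℤ) → ℤ) (p : E → ℝ) : Set (E → ℤ) :=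
  {z | z ∈ Demand b v p ∧ ∀ y ∈ Demand b v p, z ≤ y → y = z}

/-- M♮-concavity, equivalent to the strong gross substitutes property. -/
def MNatConcave (b : E → ℤ) (v : (E → ℤ) → ℤ) : Prop :=
  ∀ x ∈ Box b, ∀ y ∈ Box b, ∀ e : E, y e < x e →
    v x + v y ≤ v (x - chi e) + v (y + chi e) ∨
    ∃ f : E, x f < y f ∧ v x + v y ≤ v (x - chi e + chi f) + v (y + chi e - chi f)

/-- Prices `p` are packing: a choice of preferred bundles oversells no item. -/
def Packing {N : Type*} [Fintype N] (b : E → ℤ) (v : N → (E → ℤ) → ℤ) (p : E → ℝ) : Prop :=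
  ∃ z : N → E → ℤ, (∀ i, z i ∈ Demand b (v i) p) ∧ ∀ e, ∑ i, z i e ≤ b e

/-- Prices `p` are covering: a choice of preferred bundles sells all items. -/
def Covering {N : Type*} [Fintype N] (b : E → ℤ) (v : N → (E → ℤ) → ℤ) (p : E → ℝ) : Prop :=
  ∃ z : N → E → ℤ, (∀ i, z i ∈ Demand b (v i) p) ∧ ∀ e, b e ≤ ∑ i, z i e

/-- Prices `p` are Walrasian: a choice of preferred bundles exactly exhausts the supply. -/
def Walrasian {N : Type*} [Fintype N] (b : E → ℤ) (v : N → (E → ℤ) → ℤ) (p : E → ℝ) : Prop :=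
  ∃ z : N → E → ℤ, (∀ i, z i ∈ Demand b (v i) p) ∧ ∀ e, ∑ i, z i e = b e

lemma sum_chi_s14 (p : E → ℝ) (e : E) : ∑ f, p f * ((chi e f : ℤ) : ℝ) = p e := by
  simp [chi]

lemma Ladd (p : E → ℝ) (w : E → ℤ) (e : E) :
    ∑ g, p g * (((w + chi e) g : ℤ) : ℝ) = (∑ g, p g * ((w g : ℤ) : ℝ)) + p e := by
  simp only [Pi.add_apply, Int.cast_add, mul_add, Finset.sum_add_distrib, sum_chi_s14]

lemma Lsub (p : E → ℝ) (w : E → ℤ) (e : E) :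
    ∑ g, p g * (((w - chi e) g : ℤ) : ℝ) = (∑ g, p g * ((w g : ℤ) : ℝ)) - p e := by
  simp only [Pi.sub_apply, Int.cast_sub, mul_sub, Finset.sum_sub_distrib, sum_chi_s14]

lemma util_eq (v : (E → ℤ) → ℤ) (p : E → ℝ) (z : E → ℤ) :
    util v p z = (v z : ℝ) - ∑ g, p g * ((z g : ℤ) : ℝ) := rfl

lemma exch (b : E → ℤ) (v : (E → ℤ) → ℤ) (p : E → ℝ) (hv : MNatConcave b v)
    (x y : E → ℤ) (hx : x ∈ Demand b v p) (hy : y ∈ Demand b v p) (e : E) (he : y e < x e) :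
    y + chi e ∈ Demand b v p ∨ ∃ f, x f < y f ∧ y + chi e - chi f ∈ Demand b v p := by
  have hxb := hx.1; have hyb := hy.1
  have hyce : y + chi e ∈ Box b := by
    intro g
    have h1 := hyb g; have h2 := hxb g
    simp only [Pi.add_apply, chi]
    by_cases hg : g = e
    · subst hg; simp only [if_pos rfl]; omega
    · simp only [if_neg hg, add_zero]; exact h1
  rcases hv x hxb y hyb e he with hvv | ⟨f, hf, hvv⟩
  · left
    have hxe : x - chi e ∈ Box b := by
      intro g
      have h1 := hyb g; have h2 := hxb g
      simp only [Pi.sub_apply, chi]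
      by_cases hg : g = e
      · subst hg; simp only [if_pos rfl]; omega
      · simp only [if_neg hg, sub_zero]; exact h2
    have hR : ((v x : ℝ) + v y) ≤ (v (x - chi e) : ℝ) + v (y + chi e) := by exact_mod_cast hvv
    have h1 : util v p (x - chi e) ≤ util v p x := hx.2 _ hxe
    have h2 : util v p y ≤ util v p (y + chi e) := by
      rw [util_eq, util_eq, Lsub] at h1
      rw [util_eq, util_eq, Ladd]
      linarith
    exact ⟨hyce, fun w hw => (hy.2 w hw).trans h2⟩
  · right
    refine ⟨f, hf, ?_⟩
    have hef : e ≠ f := by intro h; subst h; omega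
    have hxe : x - chi e + chi f ∈ Box b := by
      intro g
      have h1 := hyb g; have h2 := hxb g
      simp only [Pi.add_apply, Pi.sub_apply, chi]
      by_cases hg : g = e
      · subst hg; simp only [if_pos rfl, if_neg hef]; omega
      · by_cases hg' : g = f
        · subst hg'; simp only [if_pos rfl, if_neg hg]; omega
        · simp only [if_neg hg, if_neg hg', sub_zero, add_zero]; exact h2
    have hyce' : y + chi e - chi f ∈ Box b := by
      intro g
      have h1 := hyb g; have h2 := hxb g
      simp only [Pi.add_apply, Pi.sub_apply, chi]
      by_cases hg : g = e
      · subst hg; simp only [if_pos rfl, if_neg hef]; omega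
      · by_cases hg' : g = f
        · subst hg'; simp only [if_pos rfl, if_neg hg]; omega
        · simp only [if_neg hg, if_neg hg', sub_zero, add_zero]; exact h1
    have hR : ((v x : ℝ) + v y) ≤ (v (x - chi e + chi f) : ℝ) + v (y + chi e - chi f) := by
      exact_mod_cast hvv
    have h1 : util v p (x - chi e + chi f) ≤ util v p x := hx.2 _ hxe
    have h2 : util v p y ≤ util v p (y + chi e - chi f) := by
      rw [util_eq, util_eq, Ladd, Lsub] at h1
      rw [util_eq, util_eq, Lsub, Ladd]
      linarith
    exact ⟨hyce', fun w hw => (hy.2 w hw).trans h2⟩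

/-- In a market with strong gross substitutes valuations, prices are Walrasian
iff they are both packing and covering. -/
theorem stmt14 {N : Type*} [Fintype N] (b : E → ℤ) (hb : 0 ≤ b)
    (v : N → (E → ℤ) → ℤ) (hsgs : ∀ i, MNatConcave b (v i))
    (hmono : ∀ i, ∀ x ∈ Box b, ∀ y ∈ Box b, x ≤ y → v i x ≤ v i y)
    (p : E → ℝ) (hp : 0 ≤ p) :
    Walrasian b v p ↔ Packing b v p ∧ Covering b v p := by
  constructor
  · rintro ⟨z, hz, hs⟩
    exact ⟨⟨z, hz, fun e => (hs e).le⟩, ⟨z, hz, fun e => (hs e).ge⟩⟩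
  rintro ⟨⟨y0, hy0, hy0s⟩, ⟨z0, hz0, hz0s⟩⟩
  classical
  suffices H : ∀ n : ℕ, ∀ y z : N → E → ℤ,
      (∀ i, y i ∈ Demand b (v i) p) → (∀ e, ∑ i, y i e ≤ b e) →
      (∀ i, z i ∈ Demand b (v i) p) → (∀ e, b e ≤ ∑ i, z i e) →
      (∑ i, ∑ e, (z i e - y i e).natAbs) = n →
      ∃ w : N → E → ℤ, (∀ i, w i ∈ Demand b (v i) p) ∧ ∀ e, ∑ i, w i e = b e by
    exact H _ y0 z0 hy0 hy0s hz0 hz0s rfl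
  intro n
  induction n using Nat.strong_induction_on with
  | _ n ih =>
  intro y z hy hys hz hzs hn
  by_cases hcov : ∀ e, b e ≤ ∑ i, y i e
  · exact ⟨y, hy, fun e => le_antisymm (hys e) (hcov e)⟩
  push_neg at hcov
  obtain ⟨e, he⟩ := hcov
  have h1 : ∑ i, y i e < ∑ i, z i e := lt_of_lt_of_le he (hzs e)
  obtain ⟨i, -, hi⟩ := Finset.exists_lt_of_sum_lt h1
  rcases exch b (v i) p (hsgs i) (z i) (y i) (hz i) (hy i) e hi with hcase | ⟨f, hf, hcase⟩
  · -- replace y i by y i + chi e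
    set y' : N → E → ℤ := fun j => if j = i then y i + chi e else y j with hy'
    have hsum : ∀ e', ∑ j, y' j e' = (∑ j, y j e') + chi e e' := by
      intro e'
      have : ∀ j : N, y' j e' = y j e' + if j = i then chi e e' else 0 := by
        intro j; by_cases h : j = i <;> simp [hy', h]
      simp only [this, Finset.sum_add_distrib, Finset.sum_ite_eq', Finset.mem_univ, if_pos]
    refine ih (∑ j, ∑ g, (z j g - y' j g).natAbs) ?_ y' z ?_ ?_ hz hzs rfl
    · rw [← hn]
      apply Finset.sum_lt_sum
      · intro j _
        by_cases h : j = i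
        · subst h
          apply Finset.sum_le_sum
          intro g _
          by_cases hg : g = e <;> simp [hy', chi, hg] <;> omega
        · simp [hy', h]
      · refine ⟨i, Finset.mem_univ i, ?_⟩
        apply Finset.sum_lt_sum
        · intro g _
          by_cases hg : g = e <;> simp [hy', chi, hg] <;> omega
        · exact ⟨e, Finset.mem_univ e, by simp [hy', chi]; omega⟩
    · intro j
      by_cases h : j = i
      · subst h; simpa [hy'] using hcase
      · simpa [hy', h] using hy j
    · intro e'
      rw [hsum]
      by_cases hg : e' = e
      · subst hg; simp [chi]; omega
      · simp [chi, hg]; exact hys e'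
  · -- replace y i by y i + chi e - chi f
    have hef : e ≠ f := by intro h; subst h; omega
    set y' : N → E → ℤ := fun j => if j = i then y i + chi e - chi f else y j with hy'
    have hsum : ∀ e', ∑ j, y' j e' = (∑ j, y j e') + chi e e' - chi f e' := by
      intro e'
      have : ∀ j : N, y' j e' = y j e' + if j = i then chi e e' - chi f e' else 0 := by
        intro j; by_cases h : j = i <;> simp [hy', h] <;> ring
      simp only [this, Finset.sum_add_distrib, Finset.sum_ite_eq', Finset.mem_univ, if_pos]
      ring
    refine ih (∑ j, ∑ g, (z j g - y' j g).natAbs) ?_ y' z ?_ ?_ hz hzs rfl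
    · rw [← hn]
      apply Finset.sum_lt_sum
      · intro j _
        by_cases h : j = i
        · subst h
          apply Finset.sum_le_sum
          intro g _
          by_cases hg : g = e
          · subst hg; simp [hy', chi, if_neg hef]; omega
          · by_cases hg' : g = f
            · subst hg'; simp [hy', chi, if_neg hg]; omega
            · simp [hy', chi, hg, hg']
        · simp [hy', h]
      · refine ⟨i, Finset.mem_univ i, ?_⟩
        apply Finset.sum_lt_sum
        · intro g _
          by_cases hg : g = e
          · subst hg; simp [hy', chi, if_neg hef]; omega
          · by_cases hg' : g = f
            · subst hg'; simp [hy', chi, if_neg hg]; omega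
            · simp [hy', chi, hg, hg']
        · exact ⟨e, Finset.mem_univ e, by simp [hy', chi, if_neg hef]; omega⟩
    · intro j; by_cases h : j = i
      · subst h; simpa [hy'] using hcase
      · simpa [hy', h] using hy j
    · intro e'
      rw [hsum]
      by_cases hg : e' = e
      · subst hg; simp [chi, if_neg hef]; omega
      · by_cases hg' : e' = f
        · subst hg'; simp [chi, if_neg hg]
          have := hys e'; omega
        · simp [chi, hg, hg']; exact hys e'
end

section
/- In a market with strong gross substitutes valuations, the componentwise minimal packing price vector exists and equals the minimal Walrasian price vector p*: every packing price vector q satisfies p* ≤ q componentwise. -/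
open Finset

variable {E : Type*} [Fintype E] [DecidableEq E]

/-! ### Auxiliary development -/

/-- Real characteristic vector. -/
def chiR (e : E) : E → ℝ := fun f => if f = e then 1 else 0

noncomputable def boxF (b : E → ℤ) : Finset (E → ℤ) :=
  Fintype.piFinset fun e => Finset.Icc 0 (b e)

lemma mem_boxF {b : E → ℤ} {z : E → ℤ} : z ∈ boxF b ↔ z ∈ Box b := by
  simp [boxF, Box, Fintype.mem_piFinset, Finset.mem_Icc]

lemma boxF_nonempty {b : E → ℤ} (hb : 0 ≤ b) : (boxF b).Nonempty :=
  ⟨0, by simp [boxF, Fintype.mem_piFinset, Finset.mem_Icc]; exact fun e => hb e⟩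

/-- indirect utility (Lyapunov summand). -/
noncomputable def UU (b : E → ℤ) (hb : 0 ≤ b) (v : (E → ℤ) → ℤ) (p : E → ℝ) : ℝ :=
  (boxF b).sup' (boxF_nonempty hb) (util v p)

lemma le_UU {b : E → ℤ} (hb : 0 ≤ b) {z : E → ℤ} (hz : z ∈ Box b) (v : (E → ℤ) → ℤ)
    (p : E → ℝ) : util v p z ≤ UU b hb v p :=
  Finset.le_sup' _ (mem_boxF.mpr hz)

lemma exists_demand_UU {b : E → ℤ} (hb : 0 ≤ b) (v : (E → ℤ) → ℤ) (p : E → ℝ) :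
    ∃ z, z ∈ Demand b v p ∧ util v p z = UU b hb v p := by
  obtain ⟨z, hz, hzeq⟩ := Finset.exists_mem_eq_sup' (boxF_nonempty hb) (util v p)
  refine ⟨z, ⟨mem_boxF.mp hz, fun w hw => ?_⟩, hzeq.symm⟩
  have := Finset.le_sup' (util v p) (mem_boxF.mpr hw)
  rw [hzeq] at this; exact this

lemma demand_UU {b : E → ℤ} (hb : 0 ≤ b) {v : (E → ℤ) → ℤ} {p : E → ℝ} {z : E → ℤ}
    (hz : z ∈ Demand b v p) : util v p z = UU b hb v p := by
  obtain ⟨w, hw, hweq⟩ := exists_demand_UU hb v p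
  exact le_antisymm (le_UU hb hz.1 v p) (hweq ▸ hz.2 w hw.1)

lemma demand_iff {b : E → ℤ} (hb : 0 ≤ b) {v : (E → ℤ) → ℤ} {p : E → ℝ} {z : E → ℤ} :
    z ∈ Demand b v p ↔ z ∈ Box b ∧ util v p z = UU b hb v p := by
  constructor
  · intro hz; exact ⟨hz.1, demand_UU hb hz⟩
  · rintro ⟨hzB, hzeq⟩
    exact ⟨hzB, fun w hw => hzeq ▸ le_UU hb hw v p⟩

/-! price-sum lemmas -/

lemma util_add {v : (E → ℤ) → ℤ} (p d : E → ℝ) (z : E → ℤ) :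
    util v (p + d) z = util v p z - ∑ e, d e * (z e : ℝ) := by
  unfold util
  simp only [Pi.add_apply, add_mul]
  rw [Finset.sum_add_distrib]
  ring

lemma sum_smul_chiR (s : ℝ) (e : E) (z : E → ℤ) :
    ∑ g, (s • chiR e) g * (z g : ℝ) = s * (z e : ℝ) := by
  have h : ∀ g, (s • chiR e) g * (z g : ℝ) = if g = e then s * (z g : ℝ) else 0 := by
    intro g
    by_cases hg : g = e <;> simp [chiR, hg]
  rw [Finset.sum_congr rfl fun g _ => h g, Finset.sum_ite_eq' Finset.univ e]
  simp

lemma util_add_smul {v : (E → ℤ) → ℤ} (P : E → ℝ) (s : ℝ) (e : E) (z : E → ℤ) :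
    util v (P + s • chiR e) z = util v P z - s * (z e : ℝ) := by
  rw [util_add, sum_smul_chiR]

lemma util_add_chi (v : (E → ℤ) → ℤ) (p : E → ℝ) (z : E → ℤ) (g : E) :
    util v p (z + chi g) = util v p z + ((v (z + chi g) : ℝ) - (v z : ℝ)) - p g := by
  unfold util
  have key : ∑ e, p e * (((z + chi g) e : ℤ) : ℝ) = (∑ e, p e * ((z e : ℤ) : ℝ)) + p g := by
    have h : ∀ e, p e * (((z + chi g) e : ℤ) : ℝ)
        = p e * ((z e : ℤ) : ℝ) + (if e = g then p e else 0) := by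
      intro e
      by_cases he : e = g <;> simp [Pi.add_apply, chi, he] <;> push_cast <;> ring
    rw [Finset.sum_congr rfl fun e _ => h e, Finset.sum_add_distrib,
      Finset.sum_ite_eq' Finset.univ g]
    simp
  rw [key]; ring

lemma util_sub_chi (v : (E → ℤ) → ℤ) (p : E → ℝ) (z : E → ℤ) (g : E) :
    util v p (z - chi g) = util v p z + ((v (z - chi g) : ℝ) - (v z : ℝ)) + p g := by
  unfold util
  have key : ∑ e, p e * (((z - chi g) e : ℤ) : ℝ) = (∑ e, p e * ((z e : ℤ) : ℝ)) - p g := by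
    have h : ∀ e, p e * (((z - chi g) e : ℤ) : ℝ)
        = p e * ((z e : ℤ) : ℝ) - (if e = g then p e else 0) := by
      intro e
      by_cases he : e = g <;> simp [Pi.sub_apply, chi, he] <;> push_cast <;> ring
    rw [Finset.sum_congr rfl fun e _ => h e, Finset.sum_sub_distrib,
      Finset.sum_ite_eq' Finset.univ g]
    simp
  rw [key]; ring

lemma util_sub_add_chi (v : (E → ℤ) → ℤ) (p : E → ℝ) (z : E → ℤ) (g f : E) :
    util v p (z - chi g + chi f)
      = util v p z + ((v (z - chi g + chi f) : ℝ) - (v z : ℝ)) + p g - p f := by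
  rw [util_add_chi, util_sub_chi]; ring

lemma util_add_sub_chi (v : (E → ℤ) → ℤ) (p : E → ℝ) (z : E → ℤ) (g f : E) :
    util v p (z + chi g - chi f)
      = util v p z + ((v (z + chi g - chi f) : ℝ) - (v z : ℝ)) - p g + p f := by
  rw [util_sub_chi, util_add_chi]; ring

/-! Box membership lemmas -/

lemma box_sub_chi {b : E → ℤ} {x : E → ℤ} (hx : x ∈ Box b) {g : E} (h : 1 ≤ x g) :
    x - chi g ∈ Box b := by
  intro e
  have := hx e
  by_cases he : e = g <;> simp [chi, he, Pi.sub_apply] <;> [skip; exact this] <;> subst he <;> omega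

lemma box_add_chi {b : E → ℤ} {y : E → ℤ} (hy : y ∈ Box b) {g : E} (h : y g < b g) :
    y + chi g ∈ Box b := by
  intro e
  have := hy e
  by_cases he : e = g <;> simp [chi, he, Pi.add_apply] <;> [skip; exact this] <;> subst he <;> omega

/-! optimal pair transfer -/

lemma demand_transfer {b : E → ℤ} {v : (E → ℤ) → ℤ} {p p' : E → ℝ} {x y x' y' : E → ℤ}
    (hx : x ∈ Demand b v p) (hy : y ∈ Demand b v p')
    (hx' : x' ∈ Box b) (hy' : y' ∈ Box b)
    (hsum : util v p x + util v p' y ≤ util v p x' + util v p' y') :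
    x' ∈ Demand b v p ∧ y' ∈ Demand b v p' := by
  have h1 : util v p x' ≤ util v p x := hx.2 x' hx'
  have h2 : util v p' y' ≤ util v p' y := hy.2 y' hy'
  have hx'eq : util v p x' = util v p x := le_antisymm h1 (by linarith)
  have hy'eq : util v p' y' = util v p' y := le_antisymm h2 (by linarith)
  exact ⟨⟨hx', fun w hw => (hx.2 w hw).trans hx'eq.symm.le⟩,
    ⟨hy', fun w hw => (hy.2 w hw).trans hy'eq.symm.le⟩⟩

/-! Potential decrease helper -/

lemma phi_dec {x y y' : E → ℤ} {e g : E} (hge : g ≠ e)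
    (hdec : (x g - y' g).toNat + 1 ≤ (x g - y g).toNat)
    (hother : ∀ g', g' ≠ g → (x g' - y' g').toNat ≤ (x g' - y g').toNat) :
    (∑ g' ∈ Finset.univ.erase e, (x g' - y' g').toNat) + 1 ≤
      ∑ g' ∈ Finset.univ.erase e, (x g' - y g').toNat := by
  classical
  have hmem : g ∈ Finset.univ.erase e := Finset.mem_erase.mpr ⟨hge, Finset.mem_univ g⟩
  have h1 : ∀ g' ∈ Finset.univ.erase e,
      (x g' - y' g').toNat + (if g' = g then 1 else 0) ≤ (x g' - y g').toNat := by
    intro g' _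
    by_cases h : g' = g
    · subst h; simpa using hdec
    · simpa [h] using hother g' h
  calc (∑ g' ∈ Finset.univ.erase e, (x g' - y' g').toNat) + 1
      = ∑ g' ∈ Finset.univ.erase e,
          ((x g' - y' g').toNat + if g' = g then 1 else 0) := by
        rw [Finset.sum_add_distrib, Finset.sum_ite_eq' _ g (fun _ => 1)]
        simp [hmem]
    _ ≤ _ := Finset.sum_le_sum h1

/-! ### The gross-substitutes demand monotonicity lemma -/

lemma gs_up {b : E → ℤ} {v : (E → ℤ) → ℤ} (hb : 0 ≤ b) (hv : MNatConcave b v)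
    (p : E → ℝ) (e : E) {δ : ℝ} (hδ : 0 ≤ δ) {x : E → ℤ} (hx : x ∈ Demand b v p) :
    ∃ y, y ∈ Demand b v (p + δ • chiR e) ∧ ∀ g, g ≠ e → x g ≤ y g := by
  classical
  set p' : E → ℝ := p + δ • chiR e with hp'
  have hp'g : ∀ g, g ≠ e → p' g = p g := by
    intro g hg; simp [hp', chiR, hg]
  have hp'e : p' e = p e + δ := by simp [hp', chiR]
  obtain ⟨y0, hy0, _⟩ := exists_demand_UU hb v p'
  set D : Finset (E → ℤ) := (boxF b).filter (fun z => z ∈ Demand b v p') with hD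
  have hDne : D.Nonempty := ⟨y0, Finset.mem_filter.mpr ⟨mem_boxF.mpr hy0.1, hy0⟩⟩
  obtain ⟨y, hyD, hymin⟩ := Finset.exists_min_image D
    (fun z => ∑ g ∈ Finset.univ.erase e, (x g - z g).toNat) hDne
  have hy : y ∈ Demand b v p' := (Finset.mem_filter.mp hyD).2
  refine ⟨y, hy, ?_⟩
  by_contra hcon
  push_neg at hcon
  obtain ⟨g, hge, hgy⟩ := hcon
  have hxB : x ∈ Box b := hx.1
  have hyB : y ∈ Box b := hy.1
  have hΦ : ∀ y', y' ∈ Demand b v p' →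
      (∑ g' ∈ Finset.univ.erase e, (x g' - y' g').toNat) + 1 ≤
        (∑ g' ∈ Finset.univ.erase e, (x g' - y g').toNat) → False := by
    intro y' hy' hlt
    have := hymin y' (Finset.mem_filter.mpr ⟨mem_boxF.mpr hy'.1, hy'⟩)
    omega
  rcases hv x hxB y hyB g hgy with h1 | ⟨f, hxf, h2⟩
  · -- branch 1 : pure transfer of g from x to y
    have hx' : x - chi g ∈ Box b := box_sub_chi hxB (by have := (hyB g).1; omega)
    have hy' : y + chi g ∈ Box b := box_add_chi hyB (lt_of_lt_of_le hgy (hxB g).2)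
    have hcast : (0:ℝ) ≤ ((v (x - chi g) : ℝ) - v x) + ((v (y + chi g) : ℝ) - v y) := by
      have : ((v x : ℝ) + v y) ≤ ((v (x - chi g) : ℝ) + v (y + chi g)) := by exact_mod_cast h1
      linarith
    have hsum : util v p x + util v p' y ≤ util v p (x - chi g) + util v p' (y + chi g) := by
      rw [util_sub_chi, util_add_chi, hp'g g hge]
      linarith
    obtain ⟨_, hy'D⟩ := demand_transfer hx hy hx' hy' hsum
    refine hΦ _ hy'D (phi_dec hge ?_ ?_)
    · have : (y + chi g) g = y g + 1 := by simp [chi]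
      rw [this]; omega
    · intro g' hg'
      have : (y + chi g) g' = y g' := by simp [chi, hg']
      rw [this]
  · -- branch 2 : exchange g for f
    have hfg : f ≠ g := by intro h; rw [h] at hxf; omega
    have hx'1 : x - chi g ∈ Box b := box_sub_chi hxB (by have := (hyB g).1; omega)
    have hx' : x - chi g + chi f ∈ Box b := by
      apply box_add_chi hx'1
      have h3 : (x - chi g) f = x f := by simp [chi, hfg]
      rw [h3]; exact lt_of_lt_of_le hxf (hyB f).2
    have hy'1 : y + chi g ∈ Box b := box_add_chi hyB (lt_of_lt_of_le hgy (hxB g).2)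
    have hy' : y + chi g - chi f ∈ Box b := by
      apply box_sub_chi hy'1
      have h3 : (y + chi g) f = y f := by simp [chi, hfg]
      rw [h3]; have := (hxB f).1; omega
    have hcast : (0:ℝ) ≤ ((v (x - chi g + chi f) : ℝ) - v x)
        + ((v (y + chi g - chi f) : ℝ) - v y) := by
      have : ((v x : ℝ) + v y) ≤ ((v (x - chi g + chi f) : ℝ) + v (y + chi g - chi f)) := by
        exact_mod_cast h2
      linarith
    by_cases hfe : f = e
    · subst hfe
      -- price deficit δ ; conclude δ = 0 then proceed
      have hval : util v p (x - chi g + chi f) + util v p' (y + chi g - chi f)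
          ≥ util v p x + util v p' y + δ := by
        rw [util_sub_add_chi, util_add_sub_chi, hp'g g hge, hp'e]
        linarith
      have hδ0 : δ = 0 := by
        have hu1 : util v p (x - chi g + chi f) ≤ UU b hb v p := le_UU hb hx' v p
        have hu2 : util v p' (y + chi g - chi f) ≤ UU b hb v p' := le_UU hb hy' v p'
        have he1 : util v p x = UU b hb v p := demand_UU hb hx
        have he2 : util v p' y = UU b hb v p' := demand_UU hb hy
        nlinarith
      have hsum : util v p x + util v p' y
          ≤ util v p (x - chi g + chi f) + util v p' (y + chi g - chi f) := by
        rw [hδ0] at hval; linarith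
      obtain ⟨_, hy'D⟩ := demand_transfer hx hy hx' hy' hsum
      refine hΦ _ hy'D (phi_dec hge ?_ ?_)
      · have hval' : (y + chi g - chi f) g = y g + 1 := by simp [chi, hge, hfg.symm]
        rw [hval']; omega
      · intro g' hg'
        by_cases hgf : g' = f
        · have hval' : (y + chi g - chi f) f = y f - 1 := by simp [chi, hfg]
          rw [hgf, hval']; omega
        · have hval' : (y + chi g - chi f) g' = y g' := by simp [chi, hg', hgf]
          rw [hval']
    · -- f ≠ e : prices cancel exactly
      have hsum : util v p x + util v p' y
          ≤ util v p (x - chi g + chi f) + util v p' (y + chi g - chi f) := by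
        rw [util_sub_add_chi, util_add_sub_chi, hp'g g hge, hp'g f hfe]
        linarith
      obtain ⟨_, hy'D⟩ := demand_transfer hx hy hx' hy' hsum
      refine hΦ _ hy'D (phi_dec hge ?_ ?_)
      · have hval' : (y + chi g - chi f) g = y g + 1 := by simp [chi, hfg.symm]
        rw [hval']; omega
      · intro g' hg'
        by_cases hgf : g' = f
        · have hval' : (y + chi g - chi f) f = y f - 1 := by simp [chi, hfg]
          rw [hgf, hval']; omega
        · have hval' : (y + chi g - chi f) g' = y g' := by simp [chi, hg', hgf]
          rw [hval']

/-! ### Reflection and the downward GS lemma -/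

lemma box_reflect {b : E → ℤ} {z : E → ℤ} (hz : z ∈ Box b) : b - z ∈ Box b := by
  intro e; have := hz e; simp [Pi.sub_apply]; omega

lemma mnat_reflect {b : E → ℤ} {v : (E → ℤ) → ℤ} (hv : MNatConcave b v) :
    MNatConcave b (fun z => v (b - z)) := by
  intro x hx y hy e hlt
  have hX : b - x ∈ Box b := box_reflect hx
  have hY : b - y ∈ Box b := box_reflect hy
  have hlt' : (b - x) e < (b - y) e := by simp [Pi.sub_apply]; omega
  rcases hv (b - y) hY (b - x) hX e hlt' with h1 | ⟨f, hf, h2⟩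
  · left
    show v (b - x) + v (b - y) ≤ v (b - (x - chi e)) + v (b - (y + chi e))
    have e1 : b - (x - chi e) = (b - x) + chi e := by abel
    have e2 : b - (y + chi e) = (b - y) - chi e := by abel
    rw [e1, e2]; linarith
  · right
    refine ⟨f, ?_, ?_⟩
    · have := hf; simp [Pi.sub_apply] at this ⊢; omega
    · show v (b - x) + v (b - y) ≤ v (b - (x - chi e + chi f)) + v (b - (y + chi e - chi f))
      have e1 : b - (x - chi e + chi f) = (b - x) + chi e - chi f := by abel
      have e2 : b - (y + chi e - chi f) = (b - y) - chi e + chi f := by abel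
      rw [e1, e2]; linarith

lemma demand_reflect_mp {b : E → ℤ} {v : (E → ℤ) → ℤ} {p : E → ℝ} {z : E → ℤ}
    (hz : z ∈ Demand b v p) : b - z ∈ Demand b (fun w => v (b - w)) (-p) := by
  have key : ∀ w : E → ℤ, util (fun w => v (b - w)) (-p) (b - w)
      = util v p w + ∑ e, p e * ((b e : ℤ) : ℝ) := by
    intro w
    unfold util
    beta_reduce
    have h1 : b - (b - w) = w := by abel
    rw [h1]
    have h2 : ∀ e, (-p) e * (((b - w) e : ℤ) : ℝ)
        = p e * ((w e : ℤ) : ℝ) - p e * ((b e : ℤ) : ℝ) := by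
      intro e; simp [Pi.sub_apply]; push_cast; ring
    rw [Finset.sum_congr rfl fun e _ => h2 e, Finset.sum_sub_distrib]
    ring
  refine ⟨box_reflect hz.1, fun w hw => ?_⟩
  have hw' : b - w ∈ Box b := box_reflect hw
  have hww : w = b - (b - w) := by abel
  rw [hww, key (b - w), key z]
  have := hz.2 (b - w) hw'
  linarith

lemma demand_reflect {b : E → ℤ} {v : (E → ℤ) → ℤ} {p : E → ℝ} {z : E → ℤ} :
    z ∈ Demand b v p ↔ b - z ∈ Demand b (fun w => v (b - w)) (-p) := by
  constructor
  · exact demand_reflect_mp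
  · intro h
    have h2 := demand_reflect_mp h
    have e1 : b - (b - z) = z := by abel
    have e2 : (fun w => (fun w' => v (b - w')) (b - w)) = v := by
      funext w; simp only []; congr 1; abel
    have e3 : (- -p) = p := by abel
    rw [e1, e2, e3] at h2
    exact h2

lemma gs_down {b : E → ℤ} {v : (E → ℤ) → ℤ} (hb : 0 ≤ b) (hv : MNatConcave b v)
    (p : E → ℝ) (e : E) {δ : ℝ} (hδ : 0 ≤ δ) {x : E → ℤ} (hx : x ∈ Demand b v p) :
    ∃ y, y ∈ Demand b v (p - δ • chiR e) ∧ ∀ g, g ≠ e → y g ≤ x g := by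
  obtain ⟨Y, hY, hYg⟩ := gs_up hb (mnat_reflect hv) (-p) e hδ (demand_reflect.mp hx)
  refine ⟨b - Y, ?_, ?_⟩
  · rw [demand_reflect]
    have e1 : b - (b - Y) = Y := by abel
    have e2 : -(p - δ • chiR e) = -p + δ • chiR e := by abel
    rw [e1, e2]
    exact hY
  · intro g hg
    have := hYg g hg
    simp [Pi.sub_apply] at this ⊢
    omega

/-! ### Minimum demand and its monotonicity -/

noncomputable def demandF (b : E → ℤ) (v : (E → ℤ) → ℤ) (p : E → ℝ) : Finset (E → ℤ) :=
  letI := Classical.decPred (· ∈ Demand b v p)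
  (boxF b).filter (· ∈ Demand b v p)

lemma mem_demandF {b : E → ℤ} {v : (E → ℤ) → ℤ} {p : E → ℝ} {z : E → ℤ} :
    z ∈ demandF b v p ↔ z ∈ Demand b v p := by
  classical
  rw [demandF]
  simp only [Finset.mem_filter]
  exact ⟨fun h => h.2, fun h => ⟨mem_boxF.mpr h.1, h⟩⟩

lemma demandF_nonempty {b : E → ℤ} (hb : 0 ≤ b) (v : (E → ℤ) → ℤ) (p : E → ℝ) :
    (demandF b v p).Nonempty := by
  obtain ⟨z, hz, _⟩ := exists_demand_UU hb v p
  exact ⟨z, mem_demandF.mpr hz⟩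

noncomputable def minDem {b : E → ℤ} (hb : 0 ≤ b) (v : (E → ℤ) → ℤ) (p : E → ℝ) (e : E) : ℤ :=
  (demandF b v p).inf' (demandF_nonempty hb v p) (fun z => z e)

lemma minDem_le {b : E → ℤ} (hb : 0 ≤ b) {v : (E → ℤ) → ℤ} {p : E → ℝ} {z : E → ℤ} (e : E)
    (hz : z ∈ Demand b v p) : minDem hb v p e ≤ z e :=
  Finset.inf'_le _ (mem_demandF.mpr hz)

lemma exists_minDem {b : E → ℤ} (hb : 0 ≤ b) (v : (E → ℤ) → ℤ) (p : E → ℝ) (e : E) :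
    ∃ z, z ∈ Demand b v p ∧ z e = minDem hb v p e := by
  obtain ⟨z, hz, hzeq⟩ := Finset.exists_mem_eq_inf' (demandF_nonempty hb v p) (fun z => z e)
  exact ⟨z, mem_demandF.mp hz, hzeq.symm⟩

lemma gsmin {b : E → ℤ} {v : (E → ℤ) → ℤ} (hb : 0 ≤ b) (hv : MNatConcave b v)
    (p : E → ℝ) {e f : E} (hef : e ≠ f) {γ : ℝ} (hγ : 0 ≤ γ) :
    minDem hb v p e ≤ minDem hb v (p + γ • chiR f) e := by
  obtain ⟨z, hzD, hze⟩ := exists_minDem hb v (p + γ • chiR f) e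
  obtain ⟨y, hyD, hyg⟩ := gs_down hb hv (p + γ • chiR f) f hγ hzD
  have e1 : p + γ • chiR f - γ • chiR f = p := by abel
  rw [e1] at hyD
  calc minDem hb v p e ≤ y e := minDem_le hb e hyD
    _ ≤ z e := hyg e hef
    _ = _ := hze

/-! ### Local behaviour of the indirect utility along a coordinate -/

lemma local_slope {b : E → ℤ} (hb : 0 ≤ b) (v : (E → ℤ) → ℤ) (P : E → ℝ) (e : E) :
    ∃ ε : ℝ, 0 < ε ∧ ∀ s : ℝ, 0 ≤ s → s ≤ ε →
      UU b hb v (P + s • chiR e) = UU b hb v P - s * ((minDem hb v P e : ℤ) : ℝ) := by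
  classical
  obtain ⟨z₀, hz₀D, hz₀e⟩ := exists_minDem hb v P e
  have hz₀B : z₀ ∈ Box b := hz₀D.1
  set m : ℤ := minDem hb v P e with hm
  have hlow : ∀ s : ℝ, UU b hb v P - s * (m : ℝ) ≤ UU b hb v (P + s • chiR e) := by
    intro s
    have h := le_UU hb hz₀B v (P + s • chiR e)
    rw [util_add_smul, demand_UU hb hz₀D, hz₀e] at h
    exact h
  by_cases hBd : ∃ z ∈ boxF b, z ∉ Demand b v P
  · obtain ⟨w, hwB, hwD⟩ := hBd
    set Bd : Finset (E → ℤ) := (boxF b).filter (fun z => z ∉ Demand b v P) with hBdDef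
    have hBdne : Bd.Nonempty := ⟨w, Finset.mem_filter.mpr ⟨hwB, hwD⟩⟩
    set η : ℝ := Bd.inf' hBdne (fun z => UU b hb v P - util v P z) with hη
    have hηpos : 0 < η := by
      rw [hη, Finset.lt_inf'_iff]
      intro z hz
      obtain ⟨hzB, hzD⟩ := Finset.mem_filter.mp hz
      have h1 : util v P z ≤ UU b hb v P := le_UU hb (mem_boxF.mp hzB) v P
      have h2 : util v P z ≠ UU b hb v P := fun h =>
        hzD ((demand_iff hb).mpr ⟨mem_boxF.mp hzB, h⟩)
      have := lt_of_le_of_ne h1 h2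
      linarith
    have hbe : (0:ℤ) ≤ b e := hb e
    set B : ℝ := ((b e : ℤ) : ℝ) + 1 with hB
    have hBpos : 0 < B := by rw [hB]; push_cast; exact_mod_cast lt_of_le_of_lt (by exact_mod_cast hbe) (lt_add_one _)
    refine ⟨η / B, by positivity, fun s hs0 hs1 => ?_⟩
    refine le_antisymm ?_ (hlow s)
    apply Finset.sup'_le
    intro z hz
    rw [util_add_smul]
    have hze0 : (0:ℝ) ≤ ((z e : ℤ) : ℝ) := by exact_mod_cast (mem_boxF.mp hz e).1
    by_cases hzD : z ∈ Demand b v P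
    · rw [demand_UU hb hzD]
      have h4 : (m : ℝ) ≤ ((z e : ℤ) : ℝ) := by exact_mod_cast minDem_le hb e hzD
      nlinarith
    · have h5 : η ≤ UU b hb v P - util v P z :=
        Finset.inf'_le _ (Finset.mem_filter.mpr ⟨hz, hzD⟩)
      have hmbe : (m : ℝ) ≤ ((b e : ℤ) : ℝ) := by
        have : z₀ e ≤ b e := (hz₀B e).2
        exact_mod_cast hz₀e ▸ this
      have h6 : s * ((m : ℝ) - (z e : ℤ)) ≤ η := by
        rcases le_or_gt ((m : ℝ) - ((z e : ℤ) : ℝ)) 0 with h | h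
        · nlinarith
        · have c1 : s * ((m : ℝ) - (z e : ℤ)) ≤ (η / B) * ((m : ℝ) - (z e : ℤ)) := by
            nlinarith
          have c2 : (η / B) * ((m : ℝ) - (z e : ℤ)) ≤ (η / B) * ((b e : ℤ) : ℝ) := by
            have : (0:ℝ) ≤ η / B := by positivity
            nlinarith
          have c3 : (η / B) * ((b e : ℤ) : ℝ) < η := by
            rw [div_mul_eq_mul_div, div_lt_iff₀ hBpos]
            nlinarith
          linarith
      linarith
  · push_neg at hBd
    refine ⟨1, one_pos, fun s hs0 hs1 => ?_⟩
    refine le_antisymm ?_ (hlow s)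
    apply Finset.sup'_le
    intro z hz
    rw [util_add_smul, demand_UU hb (hBd z hz)]
    have h4 : (m : ℝ) ≤ ((z e : ℤ) : ℝ) := by exact_mod_cast minDem_le hb e (hBd z hz)
    nlinarith

lemma UU_lip {b : E → ℤ} (hb : 0 ≤ b) (v : (E → ℤ) → ℤ) (P : E → ℝ) (e : E) (s t : ℝ) :
    |UU b hb v (P + s • chiR e) - UU b hb v (P + t • chiR e)| ≤ ((b e : ℤ) : ℝ) * |s - t| := by
  have key : ∀ s t : ℝ,
      UU b hb v (P + s • chiR e) ≤ UU b hb v (P + t • chiR e) + ((b e : ℤ) : ℝ) * |s - t| := by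
    intro s t
    apply Finset.sup'_le
    intro z hz
    have hzB := mem_boxF.mp hz
    have h2 : util v (P + t • chiR e) z ≤ UU b hb v (P + t • chiR e) := le_UU hb hzB v _
    rw [util_add_smul] at h2 ⊢
    have h0 : (0:ℝ) ≤ ((z e : ℤ) : ℝ) := by exact_mod_cast (hzB e).1
    have hbe : ((z e : ℤ) : ℝ) ≤ ((b e : ℤ) : ℝ) := by exact_mod_cast (hzB e).2
    have h3 : -((s - t) * ((z e : ℤ) : ℝ)) ≤ ((b e : ℤ) : ℝ) * |s - t| := by
      have h6 : -(s - t) ≤ |s - t| := by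
        rw [← abs_neg]; exact le_abs_self _
      nlinarith [abs_nonneg (s - t)]
    linarith
  rw [abs_sub_le_iff]
  constructor
  · have := key s t; linarith
  · have := key t s; rw [abs_sub_comm]; linarith

lemma antitone_of_local (F : ℝ → ℝ) (K : ℝ) (hK : 0 ≤ K)
    (hlip : ∀ s t : ℝ, |F s - F t| ≤ K * |s - t|)
    (hloc : ∀ t : ℝ, ∃ ε, 0 < ε ∧ ∀ s, t ≤ s → s ≤ t + ε → F s ≤ F t) :
    ∀ a c : ℝ, a ≤ c → F c ≤ F a := by
  intro a c hac
  set S : Set ℝ := {s | a ≤ s ∧ s ≤ c ∧ F s ≤ F a} with hS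
  have haS : a ∈ S := ⟨le_refl a, hac, le_refl _⟩
  have hbdd : BddAbove S := ⟨c, fun s hs => hs.2.1⟩
  set u : ℝ := sSup S with hu
  have hau : a ≤ u := le_csSup hbdd haS
  have huc : u ≤ c := csSup_le ⟨a, haS⟩ (fun s hs => hs.2.1)
  have hFu : F u ≤ F a := by
    by_contra hcon
    push_neg at hcon
    set d : ℝ := F u - F a with hd
    have hdpos : 0 < d := by simp [hd]; linarith
    set δ : ℝ := d / (2 * (K + 1)) with hδ
    have hδpos : 0 < δ := by positivity
    obtain ⟨s, hsS, hs⟩ := exists_lt_of_lt_csSup ⟨a, haS⟩ (show u - δ < u by linarith)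
    have hsu : s ≤ u := le_csSup hbdd hsS
    have h1 : |u - s| ≤ δ := by rw [abs_of_nonneg (by linarith)]; linarith
    have h2 : F u - F s ≤ K * δ :=
      (le_abs_self _).trans ((hlip u s).trans (mul_le_mul_of_nonneg_left h1 hK))
    have h3 : K * δ < d := by
      rw [hδ, mul_div_assoc']
      rw [div_lt_iff₀ (by linarith)]
      nlinarith
    have h4 : F s ≤ F a := hsS.2.2
    simp only [hd] at h3
    linarith
  rcases eq_or_lt_of_le huc with heq | hlt
  · rw [← heq]; exact hFu
  · exfalso
    obtain ⟨ε, hε, hloc'⟩ := hloc u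
    have husS : min (u + ε) c ∈ S := by
      refine ⟨by have := lt_min (by linarith : u < u + ε) hlt; linarith,
        min_le_right _ _, ?_⟩
      exact (hloc' _ (le_min (by linarith) (le_of_lt hlt)) (min_le_left _ _)).trans hFu
    have := le_csSup hbdd husS
    have := lt_min (by linarith : u < u + ε) hlt
    linarith

/-! ### Two–coordinate submodularity of the indirect utility -/

lemma two_coord {b : E → ℤ} {v : (E → ℤ) → ℤ} (hb : 0 ≤ b) (hv : MNatConcave b v)
    (p : E → ℝ) {e f : E} (hef : e ≠ f) {δ γ : ℝ} (hδ : 0 ≤ δ) (hγ : 0 ≤ γ) :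
    UU b hb v p + UU b hb v (p + δ • chiR e + γ • chiR f)
      ≤ UU b hb v (p + δ • chiR e) + UU b hb v (p + γ • chiR f) := by
  have habs : ∀ A B : ℝ, |A - B| ≤ |A| + |B| := by
    intro A B
    rw [sub_eq_add_neg]
    exact (abs_add_le _ _).trans (by rw [abs_neg])
  set F : ℝ → ℝ := fun t =>
    UU b hb v (p + γ • chiR f + t • chiR e) - UU b hb v (p + t • chiR e) with hF
  have hbe : (0:ℝ) ≤ ((b e : ℤ) : ℝ) := by exact_mod_cast hb e
  have hlip : ∀ s t : ℝ, |F s - F t| ≤ (2 * ((b e : ℤ) : ℝ)) * |s - t| := by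
    intro s t
    have h1 := UU_lip hb v (p + γ • chiR f) e s t
    have h2 := UU_lip hb v p e s t
    have hFst : F s - F t =
        (UU b hb v (p + γ • chiR f + s • chiR e) - UU b hb v (p + γ • chiR f + t • chiR e))
          - (UU b hb v (p + s • chiR e) - UU b hb v (p + t • chiR e)) := by
      simp only [hF]; ring
    rw [hFst]
    have := habs
      (UU b hb v (p + γ • chiR f + s • chiR e) - UU b hb v (p + γ • chiR f + t • chiR e))
      (UU b hb v (p + s • chiR e) - UU b hb v (p + t • chiR e))
    linarith
  have hloc : ∀ t : ℝ, ∃ ε, 0 < ε ∧ ∀ s, t ≤ s → s ≤ t + ε → F s ≤ F t := by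
    intro t
    obtain ⟨ε₁, hε₁, h₁⟩ := local_slope hb v (p + t • chiR e) e
    obtain ⟨ε₂, hε₂, h₂⟩ := local_slope hb v (p + γ • chiR f + t • chiR e) e
    have hcomm : p + t • chiR e + γ • chiR f = p + γ • chiR f + t • chiR e := by abel
    have hmono : minDem hb v (p + t • chiR e) e
        ≤ minDem hb v (p + γ • chiR f + t • chiR e) e := by
      have := gsmin hb hv (p + t • chiR e) hef hγ
      rwa [hcomm] at this
    refine ⟨min ε₁ ε₂, lt_min hε₁ hε₂, fun s hts hsle => ?_⟩
    have hst0 : 0 ≤ s - t := by linarith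
    have hst1 : s - t ≤ ε₁ := by
      have := min_le_left ε₁ ε₂; linarith
    have hst2 : s - t ≤ ε₂ := by
      have := min_le_right ε₁ ε₂; linarith
    have hts' : t + (s - t) = s := by ring
    have E1 : p + s • chiR e = p + t • chiR e + (s - t) • chiR e := by
      rw [add_assoc, ← add_smul, hts']
    have E2 : p + γ • chiR f + s • chiR e
        = p + γ • chiR f + t • chiR e + (s - t) • chiR e := by
      rw [add_assoc (p + γ • chiR f), ← add_smul, hts']
    have k1 := h₁ (s - t) hst0 hst1
    have k2 := h₂ (s - t) hst0 hst2
    have hFs : F s = F t - (s - t) *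
        (((minDem hb v (p + γ • chiR f + t • chiR e) e : ℤ) : ℝ)
          - ((minDem hb v (p + t • chiR e) e : ℤ) : ℝ)) := by
      simp only [hF]
      rw [E1, E2, k1, k2]
      ring
    have hcast : ((minDem hb v (p + t • chiR e) e : ℤ) : ℝ)
        ≤ ((minDem hb v (p + γ • chiR f + t • chiR e) e : ℤ) : ℝ) := by exact_mod_cast hmono
    nlinarith
  have key : F δ ≤ F 0 := antitone_of_local F (2 * ((b e : ℤ) : ℝ)) (by linarith)
    hlip hloc 0 δ hδ
  have hz : (0:ℝ) • chiR e = (0 : E → ℝ) := by simp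
  have hF0 : F 0 = UU b hb v (p + γ • chiR f) - UU b hb v p := by
    simp only [hF, hz, add_zero]
  have hcomm2 : p + γ • chiR f + δ • chiR e = p + δ • chiR e + γ • chiR f := by abel
  have hFδ : F δ = UU b hb v (p + δ • chiR e + γ • chiR f) - UU b hb v (p + δ • chiR e) := by
    simp only [hF, hcomm2]
  rw [hF0, hFδ] at key
  linarith

/-! ### From pairwise to full submodularity (Topkis induction) -/

lemma stepA {b : E → ℤ} {v : (E → ℤ) → ℤ} (hb : 0 ≤ b) (hv : MNatConcave b v) :
    ∀ (S : Finset E) (p : E → ℝ) (e : E) (δ : ℝ) (d : E → ℝ), 0 ≤ δ → (∀ g, 0 ≤ d g) →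
      (∀ g ∉ S, d g = 0) → d e = 0 →
      UU b hb v p + UU b hb v (p + δ • chiR e + d)
        ≤ UU b hb v (p + δ • chiR e) + UU b hb v (p + d) := by
  intro S
  induction S using Finset.induction_on with
  | empty =>
    intro p e δ d hδ hd hsupp hde
    have hd0 : d = 0 := funext fun g => hsupp g (Finset.notMem_empty g)
    rw [hd0, add_zero, add_zero]
    linarith
  | @insert a S ha ih =>
    intro p e δ d hδ hd hsupp hde
    by_cases hda : d a = 0
    · exact ih p e δ d hδ hd
        (fun g hg => by
          by_cases hga : g = a
          · rw [hga]; exact hda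
          · exact hsupp g (by simp [Finset.mem_insert, hga, hg]))
        hde
    · have hae : a ≠ e := fun h => hda (h ▸ hde)
      set γ : ℝ := d a with hγdef
      have hγ : 0 ≤ γ := hd a
      set d₁ : E → ℝ := Function.update d a 0 with hd₁
      have hdecomp : d = γ • chiR a + d₁ := by
        funext g
        by_cases hga : g = a
        · subst hga; simp [hd₁, chiR, Function.update_self, hγdef]
        · simp [hd₁, chiR, hga, Function.update_of_ne hga]
      have hd₁0 : ∀ g, 0 ≤ d₁ g := by
        intro g
        by_cases hga : g = a
        · subst hga; simp [hd₁, Function.update_self]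
        · simp [hd₁, Function.update_of_ne hga]; exact hd g
      have hd₁supp : ∀ g ∉ S, d₁ g = 0 := by
        intro g hg
        by_cases hga : g = a
        · subst hga; simp [hd₁, Function.update_self]
        · simp [hd₁, Function.update_of_ne hga]
          exact hsupp g (by simp [Finset.mem_insert, hga, hg])
      have hd₁e : d₁ e = 0 := by
        simp [hd₁, Function.update_of_ne (Ne.symm hae)]; exact hde
      have h2c := two_coord hb hv p (show e ≠ a from fun h => hae h.symm) hδ hγ
      have hih := ih (p + γ • chiR a) e δ d₁ hδ hd₁0 hd₁supp hd₁e
      have E1 : p + γ • chiR a + δ • chiR e = p + δ • chiR e + γ • chiR a := by abel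
      have E2 : p + γ • chiR a + d₁ = p + d := by rw [hdecomp]; abel
      have E3 : p + δ • chiR e + γ • chiR a + d₁ = p + δ • chiR e + d := by
        rw [hdecomp]; abel
      rw [E1, E3, E2] at hih
      linarith

lemma stepB {b : E → ℤ} {v : (E → ℤ) → ℤ} (hb : 0 ≤ b) (hv : MNatConcave b v) :
    ∀ (S : Finset E) (p : E → ℝ) (d d' : E → ℝ), (∀ g, 0 ≤ d g) → (∀ g, 0 ≤ d' g) →
      (∀ g ∉ S, d g = 0) → (∀ g, d g ≠ 0 → d' g = 0) →
      UU b hb v p + UU b hb v (p + d + d')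
        ≤ UU b hb v (p + d) + UU b hb v (p + d') := by
  intro S
  induction S using Finset.induction_on with
  | empty =>
    intro p d d' hd hd' hsupp hdisj
    have hd0 : d = 0 := funext fun g => hsupp g (Finset.notMem_empty g)
    rw [hd0, add_zero]
  | @insert a S ha ih =>
    intro p d d' hd hd' hsupp hdisj
    by_cases hda : d a = 0
    · exact ih p d d' hd hd'
        (fun g hg => by
          by_cases hga : g = a
          · rw [hga]; exact hda
          · exact hsupp g (by simp [Finset.mem_insert, hga, hg]))
        hdisj
    · set δ : ℝ := d a with hδdef
      have hδ : 0 ≤ δ := hd a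
      have hd'a : d' a = 0 := hdisj a hda
      set d₀ : E → ℝ := Function.update d a 0 with hd₀
      have hdecomp : d = δ • chiR a + d₀ := by
        funext g
        by_cases hga : g = a
        · subst hga; simp [hd₀, chiR, Function.update_self, hδdef]
        · simp [hd₀, chiR, hga, Function.update_of_ne hga]
      have hd₀0 : ∀ g, 0 ≤ d₀ g := by
        intro g
        by_cases hga : g = a
        · subst hga; simp [hd₀, Function.update_self]
        · simp [hd₀, Function.update_of_ne hga]; exact hd g
      have hd₀supp : ∀ g ∉ S, d₀ g = 0 := by
        intro g hg
        by_cases hga : g = a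
        · subst hga; simp [hd₀, Function.update_self]
        · simp [hd₀, Function.update_of_ne hga]
          exact hsupp g (by simp [Finset.mem_insert, hga, hg])
      have hd₀disj : ∀ g, d₀ g ≠ 0 → d' g = 0 := by
        intro g hg
        by_cases hga : g = a
        · exact hga ▸ hd'a
        · apply hdisj
          simpa [hd₀, Function.update_of_ne hga] using hg
      have hA := stepA hb hv Finset.univ p a δ d' hδ hd' (fun g hg => absurd (Finset.mem_univ g) hg) hd'a
      have hih := ih (p + δ • chiR a) d₀ d' hd₀0 hd' hd₀supp hd₀disj
      have E1 : p + δ • chiR a + d₀ = p + d := by rw [hdecomp]; abel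
      rw [E1] at hih
      linarith

lemma UU_submod {b : E → ℤ} {v : (E → ℤ) → ℤ} (hb : 0 ≤ b) (hv : MNatConcave b v)
    (p q : E → ℝ) :
    UU b hb v (fun e => min (p e) (q e)) + UU b hb v (fun e => max (p e) (q e))
      ≤ UU b hb v p + UU b hb v q := by
  set r : E → ℝ := fun e => min (p e) (q e) with hr
  set d : E → ℝ := fun e => p e - r e with hd
  set d' : E → ℝ := fun e => q e - r e with hd'
  have hd0 : ∀ g, 0 ≤ d g := fun g => by simp [hd, hr, min_le_left]
  have hd'0 : ∀ g, 0 ≤ d' g := fun g => by simp [hd', hr, min_le_right]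
  have hdisj : ∀ g, d g ≠ 0 → d' g = 0 := by
    intro g hg
    have h1 : min (p g) (q g) = q g := by
      rcases le_total (p g) (q g) with h | h
      · exfalso; apply hg; simp [hd, hr, min_eq_left h]
      · exact min_eq_right h
    simp [hd', hr, h1]
  have E1 : r + d = p := by funext g; simp [hd]
  have E2 : r + d' = q := by funext g; simp [hd']
  have E3 : r + d + d' = fun e => max (p e) (q e) := by
    funext g
    have := min_add_max (p g) (q g)
    simp only [Pi.add_apply, hd, hd', hr]
    linarith
  have := stepB hb hv Finset.univ r d d' hd0 hd'0
    (fun g hg => absurd (Finset.mem_univ g) hg) hdisj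
  rw [E3, E1, E2] at this
  linarith

/-- The componentwise minimal packing price vector equals the minimal Walrasian
price vector: every packing price vector dominates `p*` componentwise. -/
theorem stmt16 {N : Type*} [Fintype N] (b : E → ℤ) (hb : 0 ≤ b)
    (v : N → (E → ℤ) → ℤ) (hsgs : ∀ i, MNatConcave b (v i))
    (hmono : ∀ i, ∀ x ∈ Box b, ∀ y ∈ Box b, x ≤ y → v i x ≤ v i y)
    (pstar : E → ℝ) (hps : 0 ≤ pstar)
    (hW : Walrasian b v pstar)
    (hmin : ∀ p : E → ℝ, 0 ≤ p → Walrasian b v p → pstar ≤ p)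
    (q : E → ℝ) (hq : 0 ≤ q) (hpack : Packing b v q) :
    pstar ≤ q := by
  classical
  obtain ⟨x, hxD, hxSum⟩ := hW
  obtain ⟨y, hyD, hySum⟩ := hpack
  set r : E → ℝ := fun e => min (pstar e) (q e) with hr
  set s : E → ℝ := fun e => max (pstar e) (q e) with hs
  set d : E → ℝ := fun e => pstar e - r e with hd
  have hd0 : ∀ e, 0 ≤ d e := fun e => by simp [hd, hr, min_le_left]
  have hrd : r + d = pstar := by funext e; simp [hd]
  have hqd : q + d = s := by
    funext e
    have := min_add_max (pstar e) (q e)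
    simp only [Pi.add_apply, hd, hr, hs]
    linarith
  -- per-buyer inequality
  have key : ∀ i, UU b hb (v i) r - util (v i) r (x i)
      ≤ ∑ e, d e * ((y i e : ℝ) - (x i e : ℝ)) := by
    intro i
    have hsub := UU_submod hb (hsgs i) pstar q
    rw [← hr, ← hs] at hsub
    have h1 : util (v i) pstar (x i) = UU b hb (v i) pstar := demand_UU hb (hxD i)
    have h2 : util (v i) q (y i) = UU b hb (v i) q := demand_UU hb (hyD i)
    have h3 : util (v i) s (y i) ≤ UU b hb (v i) s := le_UU hb (hyD i).1 (v i) s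
    have h4 : util (v i) pstar (x i)
        = util (v i) r (x i) - ∑ e, d e * ((x i e : ℤ) : ℝ) := by
      rw [← hrd, util_add]
    have h5 : util (v i) s (y i)
        = util (v i) q (y i) - ∑ e, d e * ((y i e : ℤ) : ℝ) := by
      rw [← hqd, util_add]
    have h7 : ∑ e, d e * ((y i e : ℝ) - (x i e : ℝ))
        = (∑ e, d e * ((y i e : ℤ) : ℝ)) - ∑ e, d e * ((x i e : ℤ) : ℝ) := by
      rw [← Finset.sum_sub_distrib]
      exact Finset.sum_congr rfl fun e _ => by ring
    rw [h7]
    linarith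
  -- summing over buyers
  have hsumle : ∑ i, (UU b hb (v i) r - util (v i) r (x i)) ≤ 0 := by
    calc ∑ i, (UU b hb (v i) r - util (v i) r (x i))
        ≤ ∑ i, ∑ e, d e * ((y i e : ℝ) - (x i e : ℝ)) :=
          Finset.sum_le_sum fun i _ => key i
      _ = ∑ e, d e * ((∑ i, (y i e : ℝ)) - ∑ i, (x i e : ℝ)) := by
          rw [Finset.sum_comm]
          exact Finset.sum_congr rfl fun e _ => by
            rw [mul_sub, Finset.mul_sum, Finset.mul_sum, ← Finset.sum_sub_distrib]
            exact Finset.sum_congr rfl fun i _ => by ring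
      _ ≤ 0 := by
          apply Finset.sum_nonpos
          intro e _
          have h8 : (∑ i, (y i e : ℝ)) ≤ ((b e : ℤ) : ℝ) := by
            exact_mod_cast hySum e
          have h9 : (∑ i, (x i e : ℝ)) = ((b e : ℤ) : ℝ) := by
            exact_mod_cast congrArg (fun n : ℤ => (n : ℝ)) (hxSum e)
          have := hd0 e
          nlinarith
  have hall : ∀ i, util (v i) r (x i) = UU b hb (v i) r := by
    intro i
    have hpos : ∀ j ∈ Finset.univ, (0:ℝ) ≤ UU b hb (v j) r - util (v j) r (x j) := by
      intro j _
      have := le_UU hb (hxD j).1 (v j) r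
      linarith
    have hle := Finset.single_le_sum hpos (Finset.mem_univ i)
    have := hpos i (Finset.mem_univ i)
    linarith
  have hxDr : ∀ i, x i ∈ Demand b (v i) r := fun i =>
    (demand_iff hb).mpr ⟨(hxD i).1, hall i⟩
  have hWr : Walrasian b v r := ⟨x, hxDr, hxSum⟩
  have hr0 : (0 : E → ℝ) ≤ r := fun e => le_min (hps e) (hq e)
  intro e
  exact (hmin r hr0 hWr e).trans (min_le_right _ _)
end

section
/- In a market with strong gross substitutes valuations, the componentwise maximal covering price vector exists and equals the maximal Walrasian price vector p^*: every covering price vector q satisfies q ≤ p^* componentwise. -/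
open Finset

variable {E : Type*} [Fintype E] [DecidableEq E]

lemma sum_mul_add_chi (p : E → ℝ) (z : E → ℤ) (e : E) :
    ∑ f : E, p f * (((z + chi e) f : ℤ) : ℝ) = (∑ f : E, p f * (z f : ℝ)) + p e := by
  have h : ∀ f : E, p f * (((z + chi e) f : ℤ) : ℝ)
      = p f * (z f : ℝ) + (if f = e then p f else 0) := by
    intro f
    by_cases hf : f = e <;> simp [chi, hf] <;> push_cast <;> ring
  simp_rw [h, Finset.sum_add_distrib, Finset.sum_ite_eq' Finset.univ e p,
    Finset.mem_univ, if_true]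

lemma sum_mul_sub_chi (p : E → ℝ) (z : E → ℤ) (e : E) :
    ∑ f : E, p f * (((z - chi e) f : ℤ) : ℝ) = (∑ f : E, p f * (z f : ℝ)) - p e := by
  have h : ∀ f : E, p f * (((z - chi e) f : ℤ) : ℝ)
      = p f * (z f : ℝ) - (if f = e then p f else 0) := by
    intro f
    by_cases hf : f = e <;> simp [chi, hf] <;> push_cast <;> ring
  simp_rw [h, Finset.sum_sub_distrib, Finset.sum_ite_eq' Finset.univ e p,
    Finset.mem_univ, if_true]

lemma demand_nonempty (b : E → ℤ) (hb : 0 ≤ b) (v : (E → ℤ) → ℤ) (p : E → ℝ) :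
    (Demand b v p).Nonempty := by
  have hsub : Box b ⊆ Set.pi Set.univ (fun e => Set.Icc 0 (b e)) := by
    intro z hz
    simp only [Set.mem_pi, Set.mem_univ, Set.mem_Icc, forall_true_left]
    exact fun e => ⟨(hz e).1, (hz e).2⟩
  have hfin : (Box b).Finite :=
    (Set.Finite.pi (fun e => Set.finite_Icc 0 (b e))).subset hsub
  have h0 : (0 : E → ℤ) ∈ Box b := fun e => ⟨le_rfl, hb e⟩
  obtain ⟨z, hz, hmx⟩ := Set.Finite.exists_maximalFor (util v p) (Box b) hfin ⟨0, h0⟩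
  refine ⟨z, hz, fun y hy => ?_⟩
  rcases le_total (util v p y) (util v p z) with h | h
  · exact h
  · exact hmx hy h

/-- If prices rise only outside `S`, demand on `S` does not fall. -/
lemma demand_mono {b : E → ℤ} {v : (E → ℤ) → ℤ} (hv : MNatConcave b v)
    (p p' : E → ℝ) (hpp' : ∀ e, p e ≤ p' e) (S : Finset E)
    (hS : ∀ e ∈ S, p e = p' e) (x : E → ℤ) (hx : x ∈ Demand b v p)
    (x0 : E → ℤ) (hx0 : x0 ∈ Demand b v p') :
    ∃ x' ∈ Demand b v p', ∀ e ∈ S, x e ≤ x' e := by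
  obtain ⟨n, hn⟩ : ∃ n, ∑ e ∈ S, (x e - x0 e).toNat = n := ⟨_, rfl⟩
  induction n using Nat.strong_induction_on generalizing x0 with
  | _ n ih =>
  by_cases hd : ∀ e ∈ S, x e ≤ x0 e
  · exact ⟨x0, hx0, hd⟩
  push_neg at hd
  obtain ⟨e, heS, he⟩ := hd
  -- step: construct B ∈ Demand with strictly smaller deficiency
  have hbx := hx.1
  have hbx0 := hx0.1
  suffices hstep : ∃ B ∈ Demand b v p', ∑ g ∈ S, (x g - B g).toNat < n by
    obtain ⟨B, hB, hlt⟩ := hstep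
    exact ih _ hlt B hB rfl
  rcases hv x hx.1 x0 hx0.1 e he with h | ⟨f, hf, h⟩
  · -- case 1 : move a unit of e from x to x0
    have hAbox : x - chi e ∈ Box b := by
      intro g
      have h1 := hbx g
      have h2 := hbx0 e
      by_cases hg : g = e
      · subst hg; simp [chi]; omega
      · simp [chi, hg]; omega
    have hBbox : x0 + chi e ∈ Box b := by
      intro g
      have h1 := hbx0 g
      have h2 := hbx e
      by_cases hg : g = e
      · subst hg; simp [chi]; omega
      · simp [chi, hg]; omega
    have hA_le : util v p (x - chi e) ≤ util v p x := hx.2 _ hAbox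
    have hv' : ((v x : ℝ) + (v x0 : ℝ)) ≤ ((v (x - chi e) : ℝ) + (v (x0 + chi e) : ℝ)) := by
      exact_mod_cast h
    have hpe := hS e heS
    have hsum : util v p x + util v p' x0 ≤ util v p (x - chi e) + util v p' (x0 + chi e) := by
      simp only [util, sum_mul_sub_chi, sum_mul_add_chi]
      linarith
    have hB_opt : util v p' x0 ≤ util v p' (x0 + chi e) := by linarith
    refine ⟨x0 + chi e, ⟨hBbox, fun y hy => (hx0.2 y hy).trans hB_opt⟩, ?_⟩
    rw [← hn]
    apply Finset.sum_lt_sum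
    · intro g hg
      by_cases hg' : g = e
      · subst hg'; simp [chi]; omega
      · simp [chi, hg']
    · refine ⟨e, heS, ?_⟩
      simp [chi]; omega
  · -- case 2 : exchange e for f
    have hef : e ≠ f := by
      intro hh; rw [hh] at he; omega
    have hfe : f ≠ e := Ne.symm hef
    have hAbox : x - chi e + chi f ∈ Box b := by
      intro g
      have h1 := hbx g
      have h2 := hbx0 e
      have h3 := hbx0 f
      by_cases hg : g = e
      · subst hg; simp [chi, hef]; omega
      · by_cases hg' : g = f
        · subst hg'; simp [chi, hfe]
          omega
        · simp [chi, hg, hg']; omega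
    have hBbox : x0 + chi e - chi f ∈ Box b := by
      intro g
      have h1 := hbx0 g
      have h2 := hbx e
      have h3 := hbx f
      by_cases hg : g = e
      · subst hg; simp [chi, hef]; omega
      · by_cases hg' : g = f
        · subst hg'; simp [chi, hfe]
          omega
        · simp [chi, hg, hg']; omega
    have hA_le : util v p (x - chi e + chi f) ≤ util v p x := hx.2 _ hAbox
    have hv' : ((v x : ℝ) + (v x0 : ℝ))
        ≤ ((v (x - chi e + chi f) : ℝ) + (v (x0 + chi e - chi f) : ℝ)) := by
      exact_mod_cast h
    have hpe := hS e heS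
    have hpf := hpp' f
    have hsum : util v p x + util v p' x0
        ≤ util v p (x - chi e + chi f) + util v p' (x0 + chi e - chi f) := by
      simp only [util, sum_mul_sub_chi, sum_mul_add_chi]
      linarith
    have hB_opt : util v p' x0 ≤ util v p' (x0 + chi e - chi f) := by linarith
    refine ⟨x0 + chi e - chi f, ⟨hBbox, fun y hy => (hx0.2 y hy).trans hB_opt⟩, ?_⟩
    rw [← hn]
    apply Finset.sum_lt_sum
    · intro g hg
      by_cases hg1 : g = e
      · subst hg1; simp [chi, hef]; omega
      · by_cases hg2 : g = f
        · subst hg2; simp [chi, hfe]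
          omega
        · simp [chi, hg1, hg2]
    · refine ⟨e, heS, ?_⟩
      simp [chi, hef]; omega

/-- The componentwise maximal covering price vector equals the maximal Walrasian
price vector: every covering price vector is dominated by `p^*` componentwise. -/
theorem stmt17 {N : Type*} [Fintype N] (b : E → ℤ) (hb : 0 ≤ b)
    (v : N → (E → ℤ) → ℤ) (hsgs : ∀ i, MNatConcave b (v i))
    (hmono : ∀ i, ∀ x ∈ Box b, ∀ y ∈ Box b, x ≤ y → v i x ≤ v i y)
    (pstar : E → ℝ) (hps : 0 ≤ pstar)
    (hW : Walrasian b v pstar)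
    (hmax : ∀ p : E → ℝ, 0 ≤ p → Walrasian b v p → p ≤ pstar)
    (q : E → ℝ) (hq : 0 ≤ q) (hcov : Covering b v q) :
    q ≤ pstar := by
  classical
  obtain ⟨y, hy, hyb⟩ := hW
  obtain ⟨x, hx, hxb⟩ := hcov
  set p : E → ℝ := fun e => max (q e) (pstar e) with hpdef
  have hp0 : (0 : E → ℝ) ≤ p := fun e => le_trans (hq e) (le_max_left _ _)
  set S : Finset E := Finset.univ.filter (fun e => pstar e < q e) with hSdef
  have hqp : ∀ e, q e ≤ p e := fun e => le_max_left _ _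
  have hpsp : ∀ e, pstar e ≤ p e := fun e => le_max_right _ _
  have hSp : ∀ e ∈ S, q e = p e := by
    intro e he
    have : pstar e < q e := by simpa [hSdef] using he
    simp only [hpdef]
    exact (max_eq_left this.le).symm
  have hSp' : ∀ e, e ∉ S → p e = pstar e := by
    intro e he
    have : ¬ pstar e < q e := by simpa [hSdef] using he
    simp only [hpdef]
    exact max_eq_right (not_lt.1 this)
  -- transfer covering bundles from q to p on S
  have hx' : ∀ i, ∃ z ∈ Demand b (v i) p, ∀ e ∈ S, x i e ≤ z e := by
    intro i
    obtain ⟨z0, hz0⟩ := demand_nonempty b hb (v i) p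
    exact demand_mono (hsgs i) q p hqp S hSp (x i) (hx i) z0 hz0
  choose z hz hzS using hx'
  -- per-buyer inequality
  have keyi : ∀ i, util (v i) p (z i) - util (v i) p (y i)
      ≤ ∑ e : E, (p e - pstar e) * ((y i e : ℝ) - (z i e : ℝ)) := by
    intro i
    have h1 : util (v i) pstar (z i) ≤ util (v i) pstar (y i) := (hy i).2 _ (hz i).1
    have expand : ∀ w : E → ℤ,
        util (v i) p w = util (v i) pstar w - ∑ e : E, (p e - pstar e) * (w e : ℝ) := by
      intro w
      simp only [util]
      have h2 : ∑ e : E, p e * (w e : ℝ)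
          = ∑ e : E, (pstar e * (w e : ℝ) + (p e - pstar e) * (w e : ℝ)) := by
        apply Finset.sum_congr rfl; intros; ring
      rw [h2, Finset.sum_add_distrib]; ring
    have hA : ∑ e : E, (p e - pstar e) * ((y i e : ℝ) - (z i e : ℝ))
        = (∑ e : E, (p e - pstar e) * (y i e : ℝ))
          - ∑ e : E, (p e - pstar e) * (z i e : ℝ) := by
      rw [← Finset.sum_sub_distrib]; apply Finset.sum_congr rfl; intros; ring
    rw [expand (z i), expand (y i), hA]
    linarith
  have hsum : ∑ i, (util (v i) p (z i) - util (v i) p (y i)) ≤ 0 := by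
    have step1 : ∑ i, (util (v i) p (z i) - util (v i) p (y i))
        ≤ ∑ i, ∑ e : E, (p e - pstar e) * ((y i e : ℝ) - (z i e : ℝ)) :=
      Finset.sum_le_sum (fun i _ => keyi i)
    have step2 : ∑ i, ∑ e : E, (p e - pstar e) * ((y i e : ℝ) - (z i e : ℝ))
        = ∑ e : E, (p e - pstar e) * ((b e : ℝ) - ∑ i, (z i e : ℝ)) := by
      rw [Finset.sum_comm]
      apply Finset.sum_congr rfl
      intro e _
      rw [← Finset.mul_sum, Finset.sum_sub_distrib]
      have hcast : (∑ i, (y i e : ℝ)) = (b e : ℝ) := by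
        exact_mod_cast hyb e
      rw [hcast]
    have step3 : ∑ e : E, (p e - pstar e) * ((b e : ℝ) - ∑ i, (z i e : ℝ)) ≤ 0 := by
      apply Finset.sum_nonpos
      intro e _
      by_cases heS : e ∈ S
      · have hc : 0 ≤ p e - pstar e := by linarith [hpsp e]
        have hbs : (b e : ℝ) - ∑ i, (z i e : ℝ) ≤ 0 := by
          have h1 : ∑ i, x i e ≤ ∑ i, z i e :=
            Finset.sum_le_sum (fun i _ => hzS i e heS)
          have h2 : b e ≤ ∑ i, z i e := le_trans (hxb e) h1
          have h3 : (b e : ℝ) ≤ ∑ i, (z i e : ℝ) := by exact_mod_cast h2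
          linarith
        nlinarith
      · have : p e = pstar e := hSp' e heS
        rw [this]
        simp
    linarith
  have hge : ∀ i ∈ Finset.univ, (0:ℝ) ≤ util (v i) p (z i) - util (v i) p (y i) :=
    fun i _ => sub_nonneg.2 ((hz i).2 _ (hy i).1)
  have hzero : ∑ i, (util (v i) p (z i) - util (v i) p (y i)) = 0 :=
    le_antisymm hsum (Finset.sum_nonneg hge)
  have heach := (Finset.sum_eq_zero_iff_of_nonneg hge).1 hzero
  have hWp : Walrasian b v p := by
    refine ⟨y, fun i => ⟨(hy i).1, fun w hw => ?_⟩, hyb⟩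
    have h0 : util (v i) p (z i) - util (v i) p (y i) = 0 := heach i (Finset.mem_univ i)
    have := (hz i).2 w hw
    linarith
  have hle := hmax p hp0 hWp
  intro e
  exact (hqp e).trans (hle e)
end
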